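/- arXiv:2112.11597 — 8 statements merged into one kernel-verified Lean document; each statement's English description precedes it below -/
import Mathlib

section
/- For every feasible solution S of a TL-RIGHTSIZE instance, cost(S) ≥ cong(𝓤), i.e. cost(S) ≥ max_{1≤t≤T} Σ_{u∈𝓤, u∼t} p*(u). In particular OPT ≥ cong(𝓤). -/
/- STATEMENT 0: For every feasible solution S of a TL-RIGHTSIZE instance,
cost(S) ≥ cong(𝓤) = max_{1≤t≤T} Σ_{u∈𝓤, u∼t} p*(u). In particular OPT ≥ cong(𝓤). -/
theorem stmt0
    (T D : ℕ) (hT : 1 ≤ T) (hD : 0 < D)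
    (U Btype Node : Type) [Fintype U] [Fintype Btype] [Nonempty Btype]
    [Fintype Node] [DecidableEq Node]
    (cost : Btype → ℝ) (cap : Btype → Fin D → ℝ)
    (dem : U → Fin D → ℝ) (s e : U → ℕ)
    (hcost : ∀ B, 0 < cost B)
    (hcap : ∀ B d, 0 < cap B d)
    (hdem : ∀ u d, 0 ≤ dem u d)
    (hspan : ∀ u, 1 ≤ s u ∧ s u ≤ e u ∧ e u ≤ T)
    (ty : Node → Btype) (assign : U → Node)
    (hfeas : ∀ (b : Node) (t : ℕ), t ∈ Finset.Icc 1 T → ∀ d : Fin D,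
      ∑ u ∈ Finset.univ.filter (fun u => assign u = b ∧ s u ≤ t ∧ t ≤ e u), dem u d
        ≤ cap (ty b) d) :
    (Finset.Icc 1 T).sup' (Finset.nonempty_Icc.mpr hT)
        (fun t => ∑ u ∈ Finset.univ.filter (fun u => s u ≤ t ∧ t ≤ e u),
          Finset.univ.inf' Finset.univ_nonempty
            (fun B => cost B * ((D : ℝ)⁻¹ * ∑ d, dem u d / cap B d)))
      ≤ ∑ b : Node, cost (ty b) := by
  apply Finset.sup'_le
  intro t ht
  have h1 : ∑ u ∈ Finset.univ.filter (fun u => s u ≤ t ∧ t ≤ e u),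
      Finset.univ.inf' Finset.univ_nonempty
        (fun B => cost B * ((D : ℝ)⁻¹ * ∑ d, dem u d / cap B d))
      ≤ ∑ u ∈ Finset.univ.filter (fun u => s u ≤ t ∧ t ≤ e u),
        cost (ty (assign u)) * ((D : ℝ)⁻¹ * ∑ d, dem u d / cap (ty (assign u)) d) :=
    Finset.sum_le_sum fun u _ => Finset.inf'_le _ (Finset.mem_univ _)
  refine h1.trans ?_
  rw [← Finset.sum_fiberwise_of_maps_to (g := assign)
      (fun u _ => Finset.mem_univ (assign u))]
  apply Finset.sum_le_sum
  intro b _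
  have hset : (Finset.univ.filter (fun u => s u ≤ t ∧ t ≤ e u)).filter
        (fun u => assign u = b)
      = Finset.univ.filter (fun u => assign u = b ∧ s u ≤ t ∧ t ≤ e u) := by
    ext u; simp; tauto
  have hcong : ∑ u ∈ (Finset.univ.filter (fun u => s u ≤ t ∧ t ≤ e u)).filter
        (fun u => assign u = b),
        cost (ty (assign u)) * ((D : ℝ)⁻¹ * ∑ d, dem u d / cap (ty (assign u)) d)
      = ∑ u ∈ Finset.univ.filter (fun u => assign u = b ∧ s u ≤ t ∧ t ≤ e u),
        cost (ty b) * ((D : ℝ)⁻¹ * ∑ d, dem u d / cap (ty b) d) := by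
    rw [hset]
    apply Finset.sum_congr rfl
    intro u hu
    have : assign u = b := by simp at hu; tauto
    rw [this]
  rw [hcong]
  have hD' : (0:ℝ) < (D:ℝ) := by exact_mod_cast hD
  have key : ∑ u ∈ Finset.univ.filter (fun u => assign u = b ∧ s u ≤ t ∧ t ≤ e u),
        cost (ty b) * ((D : ℝ)⁻¹ * ∑ d, dem u d / cap (ty b) d)
      = cost (ty b) * ((D : ℝ)⁻¹ * ∑ d,
        (∑ u ∈ Finset.univ.filter (fun u => assign u = b ∧ s u ≤ t ∧ t ≤ e u),
          dem u d) / cap (ty b) d) := by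
    rw [← Finset.mul_sum, ← Finset.mul_sum]
    congr 1
    congr 1
    rw [Finset.sum_comm]
    apply Finset.sum_congr rfl
    intro d _
    rw [Finset.sum_div]
  rw [key]
  have hbound : ∑ d, (∑ u ∈ Finset.univ.filter
        (fun u => assign u = b ∧ s u ≤ t ∧ t ≤ e u), dem u d) / cap (ty b) d
      ≤ (D : ℝ) := by
    calc ∑ d, (∑ u ∈ Finset.univ.filter
          (fun u => assign u = b ∧ s u ≤ t ∧ t ≤ e u), dem u d) / cap (ty b) d
        ≤ ∑ _d : Fin D, (1:ℝ) := by
          apply Finset.sum_le_sum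
          intro d _
          rw [div_le_one (hcap _ _)]
          exact hfeas b t ht d
      _ = (D : ℝ) := by simp
  calc cost (ty b) * ((D : ℝ)⁻¹ * ∑ d, (∑ u ∈ Finset.univ.filter
        (fun u => assign u = b ∧ s u ≤ t ∧ t ≤ e u), dem u d) / cap (ty b) d)
      ≤ cost (ty b) * ((D : ℝ)⁻¹ * (D : ℝ)) := by
        apply mul_le_mul_of_nonneg_left _ (hcost _).le
        exact mul_le_mul_of_nonneg_left hbound (by positivity)
    _ = cost (ty b) := by field_simp
end

section
/- Let B be a node-type and let V be a finite set of tasks each of which is small with respect to B (i.e. dem(u,d) ≤ cap(B,d)/2 for all u ∈ V and all dimensions d). Then V can be partitioned into k parts V₁,…,V_k, each part satisfying the capacity constraint of B at every timeslot (for every t and d, Σ_{u∈V_i, u∼t} dem(u,d) ≤ cap(B,d)), where k ≤ 1 + 2D · max_{1≤t≤T} Σ_{u∈V, u∼t} h_avg(u|B). -/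
namespace Stmt5

variable {U : Type} {D k : ℕ}

/-- Task `τ i` fits into color `c` given earlier assignment `g`. -/
def fits (cap : Fin D → ℝ) (dem : U → Fin D → ℝ) (s e : U → ℕ) (τ : ℕ → U)
    (i : ℕ) (g : ℕ → Fin k) (c : Fin k) : Prop :=
  ∀ t ∈ Finset.Icc (s (τ i)) (e (τ i)), ∀ d : Fin D,
    (∑ j ∈ (Finset.range i).filter (fun j => g j = c ∧ s (τ j) ≤ t ∧ t ≤ e (τ j)),
        dem (τ j) d) + dem (τ i) d ≤ cap d

open scoped Classical in
noncomputable def pick (cap : Fin D → ℝ) (dem : U → Fin D → ℝ) (s e : U → ℕ) (τ : ℕ → U)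
    (c0 : Fin k) (i : ℕ) (g : ℕ → Fin k) : Fin k :=
  if h : ∃ c, fits cap dem s e τ i g c then h.choose else c0

noncomputable def asg (cap : Fin D → ℝ) (dem : U → Fin D → ℝ) (s e : U → ℕ) (τ : ℕ → U)
    (c0 : Fin k) : ℕ → ℕ → Fin k
  | 0 => fun _ => c0
  | (i+1) => Function.update (Stmt5.asg cap dem s e τ c0 i) i
      (pick cap dem s e τ c0 i (Stmt5.asg cap dem s e τ c0 i))

lemma asg_stab (cap : Fin D → ℝ) (dem : U → Fin D → ℝ) (s e : U → ℕ) (τ : ℕ → U)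
    (c0 : Fin k) : ∀ {m i j : ℕ}, j < i → i ≤ m →
    Stmt5.asg cap dem s e τ c0 m j = Stmt5.asg cap dem s e τ c0 i j := by
  intro m
  induction m with
  | zero => intro i j hji him; omega
  | succ m ih =>
    intro i j hji him
    rcases eq_or_lt_of_le him with h | h
    · rw [h]
    · have him' : i ≤ m := by omega
      show Function.update (Stmt5.asg cap dem s e τ c0 m) m _ j = _
      rw [Function.update_of_ne (by omega : j ≠ m)]
      exact ih hji him'

lemma sum_filter_range_succ (P : ℕ → Prop) [DecidablePred P] (v : ℕ → ℝ) (i : ℕ) :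
    ∑ j ∈ (Finset.range (i+1)).filter P, v j
      = (∑ j ∈ (Finset.range i).filter P, v j) + if P i then v i else 0 := by
  rw [Finset.sum_filter, Finset.sum_filter, Finset.sum_range_succ]

end Stmt5

/- STATEMENT 5: A finite set V of tasks, each small w.r.t. node-type B, can be
partitioned into k parts each satisfying the capacity constraint of B at every timeslot,
with k ≤ 1 + 2D · max_{1≤t≤T} Σ_{u∈V, u∼t} h_avg(u|B). -/
theorem stmt5
    (T D : ℕ) (hT : 1 ≤ T) (hD : 0 < D)
    (U : Type) [Fintype U]
    (cap : Fin D → ℝ) (dem : U → Fin D → ℝ) (s e : U → ℕ)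
    (hcap : ∀ d, 0 < cap d)
    (hdem : ∀ u d, 0 ≤ dem u d)
    (hspan : ∀ u, 1 ≤ s u ∧ s u ≤ e u ∧ e u ≤ T)
    (hsmall : ∀ (u : U) (d : Fin D), dem u d ≤ cap d / 2) :
    ∃ (k : ℕ) (f : U → Fin k),
      (∀ (i : Fin k) (t : ℕ), t ∈ Finset.Icc 1 T → ∀ d : Fin D,
        ∑ u ∈ Finset.univ.filter (fun u => f u = i ∧ s u ≤ t ∧ t ≤ e u), dem u d
          ≤ cap d) ∧
      (k : ℝ) ≤ 1 + 2 * D *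
        (Finset.Icc 1 T).sup' (Finset.nonempty_Icc.mpr hT)
          (fun t => ∑ u ∈ Finset.univ.filter (fun u => s u ≤ t ∧ t ≤ e u),
            (D : ℝ)⁻¹ * ∑ d, dem u d / cap d) := by
  set hfun : U → ℝ := fun u => (D : ℝ)⁻¹ * ∑ d, dem u d / cap d with hfun_def
  set M : ℝ := (Finset.Icc 1 T).sup' (Finset.nonempty_Icc.mpr hT)
      (fun t => ∑ u ∈ Finset.univ.filter (fun u => s u ≤ t ∧ t ≤ e u), hfun u) with hM_def
  have hD' : (0:ℝ) < D := by exact_mod_cast hD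
  have hfun0 : ∀ u, 0 ≤ hfun u := fun u =>
    mul_nonneg (inv_nonneg.2 hD'.le)
      (Finset.sum_nonneg fun d _ => div_nonneg (hdem u d) (hcap d).le)
  have hM0 : 0 ≤ M := by
    have h1 : (1:ℕ) ∈ Finset.Icc 1 T := Finset.mem_Icc.2 ⟨le_refl 1, hT⟩
    have := Finset.le_sup' (f := fun t => ∑ u ∈ Finset.univ.filter
      (fun u => s u ≤ t ∧ t ≤ e u), hfun u) h1
    refine le_trans ?_ this
    exact Finset.sum_nonneg fun u _ => hfun0 u
  set k : ℕ := ⌊2 * (D:ℝ) * M⌋₊ + 1 with hk_def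
  have hk0 : 0 < k := Nat.succ_pos _
  have kbound : (k : ℝ) ≤ 1 + 2 * D * M := by
    have := Nat.floor_le (by positivity : (0:ℝ) ≤ 2 * (D:ℝ) * M)
    push_cast [hk_def]
    linarith
  rcases isEmpty_or_nonempty U with hU | hU
  · refine ⟨k, fun u => isEmptyElim u, ?_, kbound⟩
    intro i t ht d
    rw [Finset.univ_eq_empty, Finset.filter_empty, Finset.sum_empty]
    exact (hcap d).le
  -- nonempty case
  have dflt : U := Classical.arbitrary U
  haveI : DecidableEq U := Classical.decEq U
  haveI : IsTotal U (fun a b => s a ≤ s b) := ⟨fun a b => le_total _ _⟩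
  haveI : IsTrans U (fun a b => s a ≤ s b) := ⟨fun _ _ _ hab hbc => le_trans hab hbc⟩
  set L : List U := List.insertionSort (fun a b => s a ≤ s b) Finset.univ.toList with hL_def
  have hsort : L.Pairwise (fun a b => s a ≤ s b) := List.pairwise_insertionSort _ _
  have hperm : L.Perm Finset.univ.toList := List.perm_insertionSort _ _
  have hmem : ∀ u : U, u ∈ L := fun u =>
    hperm.mem_iff.2 (Finset.mem_toList.2 (Finset.mem_univ u))
  have hnd : L.Nodup := hperm.nodup_iff.2 (Finset.nodup_toList _)
  set n : ℕ := L.length with hn_def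
  set τ : ℕ → U := fun j => L.getD j dflt with hτ_def
  set ρ : U → ℕ := fun u => L.idxOf u with hρ_def
  have hρlt : ∀ u, ρ u < n := fun u => by
    show List.idxOf u L < L.length
    exact List.idxOf_lt_length_iff.2 (hmem u)
  have hτget : ∀ j (h : j < n), τ j = L[j] := fun j h => List.getD_eq_getElem L dflt h
  have hτρ : ∀ u, τ (ρ u) = u := by
    intro u
    rw [hτget _ (hρlt u)]
    exact List.getElem_idxOf (x := u) (xs := L) (hρlt u)
  have hτinj : ∀ a, a < n → ∀ b, b < n → τ a = τ b → a = b := by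
    intro a ha b hb hab
    rw [hτget a ha, hτget b hb] at hab
    exact (List.Nodup.getElem_inj_iff hnd).1 hab
  have hρτ : ∀ j, j < n → ρ (τ j) = j := fun j hj =>
    hτinj _ (hρlt _) _ hj (hτρ (τ j))
  have hsorted : ∀ a b, a < b → b < n → s (τ a) ≤ s (τ b) := by
    intro a b hab hb
    have ha : a < n := lt_trans hab hb
    rw [hτget a ha, hτget b hb]
    exact hsort.rel_get_of_lt (a := ⟨a, ha⟩) (b := ⟨b, hb⟩) hab
  -- the key existence lemma
  have exfits : ∀ (g : ℕ → Fin k) (i : ℕ), i < n →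
      ∃ c, Stmt5.fits cap dem s e τ i g c := by
    intro g i hi
    by_contra hcon
    push_neg at hcon
    set t0 : ℕ := s (τ i) with ht0_def
    have ht0mem : t0 ∈ Finset.Icc 1 T :=
      Finset.mem_Icc.2 ⟨(hspan (τ i)).1,
        le_trans (hspan (τ i)).2.1 (hspan (τ i)).2.2⟩
    have key : ∀ c : Fin k, (2*(D:ℝ))⁻¹ <
        ∑ j ∈ (Finset.range i).filter
          (fun j => g j = c ∧ s (τ j) ≤ t0 ∧ t0 ≤ e (τ j)), hfun (τ j) := by
      intro c
      have hc := hcon c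
      unfold Stmt5.fits at hc
      push_neg at hc
      obtain ⟨t, ht, d, hgt⟩ := hc
      have hts := Finset.mem_Icc.1 ht
      set S1 := (Finset.range i).filter
        (fun j => g j = c ∧ s (τ j) ≤ t ∧ t ≤ e (τ j)) with hS1
      set S0 := (Finset.range i).filter
        (fun j => g j = c ∧ s (τ j) ≤ t0 ∧ t0 ≤ e (τ j)) with hS0
      have hhalf : cap d / 2 < ∑ j ∈ S1, dem (τ j) d := by
        have := hsmall (τ i) d
        linarith
      have hsub : S1 ⊆ S0 := by
        intro j hj
        simp only [hS1, hS0, Finset.mem_filter, Finset.mem_range] at hj ⊢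
        obtain ⟨hjr, hcj, hst, hte⟩ := hj
        exact ⟨hjr, hcj, hsorted j i hjr hi, le_trans hts.1 hte⟩
      have step1 : ∑ j ∈ S1, dem (τ j) d / cap d ≤ ∑ j ∈ S0, dem (τ j) d / cap d :=
        Finset.sum_le_sum_of_subset_of_nonneg hsub
          (fun j _ _ => div_nonneg (hdem _ _) (hcap d).le)
      have h12 : (1:ℝ)/2 < ∑ j ∈ S1, dem (τ j) d / cap d := by
        rw [← Finset.sum_div]
        rw [lt_div_iff₀ (hcap d)]
        linarith
      have h14 : ∑ j ∈ S0, dem (τ j) d / cap d ≤ ∑ j ∈ S0, ∑ d', dem (τ j) d' / cap d' :=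
        Finset.sum_le_sum fun j _ =>
          Finset.single_le_sum (f := fun d' => dem (τ j) d' / cap d')
            (fun d' _ => div_nonneg (hdem _ _) (hcap d').le) (Finset.mem_univ d)
      have hfin : (2*(D:ℝ))⁻¹ < (D:ℝ)⁻¹ * ∑ j ∈ S0, ∑ d', dem (τ j) d' / cap d' := by
        have e1 : (2*(D:ℝ))⁻¹ = (D:ℝ)⁻¹ * (1/2) := by
          rw [mul_inv]; ring
        have e2 := mul_lt_mul_of_pos_left
          (lt_of_lt_of_le (lt_of_lt_of_le h12 step1) h14) (inv_pos.2 hD')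
        linarith
      calc (2*(D:ℝ))⁻¹ < (D:ℝ)⁻¹ * ∑ j ∈ S0, ∑ d', dem (τ j) d' / cap d' := hfin
        _ = ∑ j ∈ S0, (D:ℝ)⁻¹ * ∑ d', dem (τ j) d' / cap d' := Finset.mul_sum _ _ _
        _ = ∑ j ∈ S0, hfun (τ j) := rfl
    -- sum over colors
    set A := (Finset.range i).filter (fun j => s (τ j) ≤ t0 ∧ t0 ≤ e (τ j)) with hA
    have hre : ∀ c : Fin k, A.filter (fun j => g j = c) = (Finset.range i).filter
        (fun j => g j = c ∧ s (τ j) ≤ t0 ∧ t0 ≤ e (τ j)) := by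
      intro c
      rw [hA, Finset.filter_filter]
      exact Finset.filter_congr fun x _ => by tauto
    have hfib : ∑ c : Fin k, ∑ j ∈ A.filter (fun j => g j = c), hfun (τ j)
        = ∑ j ∈ A, hfun (τ j) := Finset.sum_fiberwise _ _ _
    have hktot : (k:ℝ) * (2*(D:ℝ))⁻¹ < ∑ j ∈ A, hfun (τ j) := by
      have hne : (Finset.univ : Finset (Fin k)).Nonempty :=
        ⟨⟨0, hk0⟩, Finset.mem_univ _⟩
      calc (k:ℝ) * (2*(D:ℝ))⁻¹ = ∑ _c : Fin k, (2*(D:ℝ))⁻¹ := by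
            rw [Finset.sum_const, Finset.card_univ, Fintype.card_fin, nsmul_eq_mul]
        _ < ∑ c : Fin k, ∑ j ∈ A.filter (fun j => g j = c), hfun (τ j) :=
            Finset.sum_lt_sum_of_nonempty hne (fun c _ => by rw [hre c]; exact key c)
        _ = ∑ j ∈ A, hfun (τ j) := hfib
    have himg : ∑ j ∈ A, hfun (τ j) ≤
        ∑ u ∈ Finset.univ.filter (fun u => s u ≤ t0 ∧ t0 ≤ e u), hfun u := by
      have hinj : ∀ x ∈ A, ∀ y ∈ A, τ x = τ y → x = y := by
        intro x hx y hy hxy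
        rw [hA, Finset.mem_filter, Finset.mem_range] at hx hy
        exact hτinj x (lt_trans hx.1 hi) y (lt_trans hy.1 hi) hxy
      rw [← Finset.sum_image hinj]
      apply Finset.sum_le_sum_of_subset_of_nonneg
      · intro u hu
        simp only [Finset.mem_image] at hu
        obtain ⟨j, hj, rfl⟩ := hu
        rw [hA, Finset.mem_filter] at hj
        exact Finset.mem_filter.2 ⟨Finset.mem_univ _, hj.2⟩
      · intro u _ _; exact hfun0 u
    have hMge : ∑ u ∈ Finset.univ.filter (fun u => s u ≤ t0 ∧ t0 ≤ e u), hfun u ≤ M :=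
      Finset.le_sup' (f := fun t => ∑ u ∈ Finset.univ.filter
        (fun u => s u ≤ t ∧ t ≤ e u), hfun u) ht0mem
    have hlt : (k:ℝ) * (2*(D:ℝ))⁻¹ < M := lt_of_lt_of_le hktot (le_trans himg hMge)
    have h2D : (0:ℝ) < 2*(D:ℝ) := by linarith
    have hklt : (k:ℝ) < 2*(D:ℝ)*M := by
      have := mul_lt_mul_of_pos_right hlt h2D
      rw [mul_assoc, inv_mul_cancel₀ (ne_of_gt h2D), mul_one] at this
      linarith [this]
    have hkgt : 2*(D:ℝ)*M < (k:ℝ) := by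
      have := Nat.lt_floor_add_one (2*(D:ℝ)*M)
      rw [hk_def]
      push_cast
      linarith
    linarith
  -- the invariant
  set c0 : Fin k := ⟨0, hk0⟩ with hc0
  have inv : ∀ i, i ≤ n → ∀ (c : Fin k) (t : ℕ) (d : Fin D),
      ∑ j ∈ (Finset.range i).filter
        (fun j => Stmt5.asg cap dem s e τ c0 i j = c ∧ s (τ j) ≤ t ∧ t ≤ e (τ j)),
        dem (τ j) d ≤ cap d := by
    intro i
    induction i with
    | zero =>
      intro _ c t d
      rw [Finset.range_zero, Finset.filter_empty, Finset.sum_empty]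
      exact (hcap d).le
    | succ i ih =>
      intro hi c t d
      have hi' : i < n := hi
      have ihc := ih (le_of_lt hi')
      have heq : Stmt5.asg cap dem s e τ c0 (i+1) = Function.update (Stmt5.asg cap dem s e τ c0 i) i
          (Stmt5.pick cap dem s e τ c0 i (Stmt5.asg cap dem s e τ c0 i)) := rfl
      have hfits : Stmt5.fits cap dem s e τ i (Stmt5.asg cap dem s e τ c0 i)
          (Stmt5.pick cap dem s e τ c0 i (Stmt5.asg cap dem s e τ c0 i)) := by
        have hex := exfits (Stmt5.asg cap dem s e τ c0 i) i hi'
        rw [Stmt5.pick, dif_pos hex]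
        exact hex.choose_spec
      rw [Stmt5.sum_filter_range_succ]
      have hcong : (Finset.range i).filter
            (fun j => Stmt5.asg cap dem s e τ c0 (i+1) j = c ∧ s (τ j) ≤ t ∧ t ≤ e (τ j))
          = (Finset.range i).filter
            (fun j => Stmt5.asg cap dem s e τ c0 i j = c ∧ s (τ j) ≤ t ∧ t ≤ e (τ j)) := by
        apply Finset.filter_congr
        intro j hj
        rw [Finset.mem_range] at hj
        rw [heq, Function.update_of_ne (Nat.ne_of_lt hj)]
      rw [hcong]
      by_cases hP : Stmt5.asg cap dem s e τ c0 (i+1) i = c ∧ s (τ i) ≤ t ∧ t ≤ e (τ i)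
      · rw [if_pos hP]
        have hcpick : Stmt5.pick cap dem s e τ c0 i (Stmt5.asg cap dem s e τ c0 i) = c := by
          have := hP.1
          rwa [heq, Function.update_self] at this
        rw [← hcpick]
        exact hfits t (Finset.mem_Icc.2 hP.2) d
      · rw [if_neg hP, add_zero]
        exact ihc c t d
  -- assemble
  refine ⟨k, fun u => Stmt5.asg cap dem s e τ c0 n (ρ u), ?_, kbound⟩
  intro i t _ d
  have hsum : ∑ u ∈ Finset.univ.filter
        (fun u => Stmt5.asg cap dem s e τ c0 n (ρ u) = i ∧ s u ≤ t ∧ t ≤ e u), dem u d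
      = ∑ j ∈ (Finset.range n).filter
        (fun j => Stmt5.asg cap dem s e τ c0 n j = i ∧ s (τ j) ≤ t ∧ t ≤ e (τ j)),
        dem (τ j) d := by
    apply Finset.sum_nbij' (i := fun u => ρ u) (j := fun j => τ j)
    · intro u hu
      rw [Finset.mem_filter] at hu
      rw [Finset.mem_filter, Finset.mem_range]
      refine ⟨hρlt u, ?_⟩
      rw [hτρ u]
      exact hu.2
    · intro j hj
      rw [Finset.mem_filter, Finset.mem_range] at hj
      rw [Finset.mem_filter]
      refine ⟨Finset.mem_univ _, ?_⟩
      rw [hρτ j hj.1]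
      exact hj.2
    · intro u _; exact hτρ u
    · intro j hj
      rw [Finset.mem_filter, Finset.mem_range] at hj
      exact hρτ j hj.1
    · intro u _
      rw [hτρ u]
  rw [hsum]
  exact inv n le_rfl i t d
end

section
/- Let B be a node-type, let b be a finite set of tasks, let v be a task each of whose demands satisfies dem(v,d) ≤ cap(B,d)/2, and suppose that for some dimension d̂, dem(v,d̂) + Σ_{u∈b, u∼t₀} dem(u,d̂) ≥ cap(B,d̂) for some timeslot t₀. Then Σ_{u∈b, u∼t₀} h_avg(u|B) ≥ 1/(2D). -/
/- STATEMENT 6: If every demand of task v satisfies dem(v,d) ≤ cap(B,d)/2 and for some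
dimension d̂ and timeslot t₀, dem(v,d̂) + Σ_{u∈b, u∼t₀} dem(u,d̂) ≥ cap(B,d̂), then
Σ_{u∈b, u∼t₀} h_avg(u|B) ≥ 1/(2D). -/
theorem stmt6
    (D : ℕ) (hD : 0 < D)
    (Task : Type) (b : Finset Task)
    (cap : Fin D → ℝ) (dem : Task → Fin D → ℝ) (s e : Task → ℕ)
    (hcap : ∀ d, 0 < cap d)
    (hdem : ∀ u d, 0 ≤ dem u d)
    (v : Task)
    (hsmall : ∀ d : Fin D, dem v d ≤ cap d / 2)
    (t₀ : ℕ) (dhat : Fin D)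
    (hviol : cap dhat ≤
      dem v dhat + ∑ u ∈ b.filter (fun u => s u ≤ t₀ ∧ t₀ ≤ e u), dem u dhat) :
    1 / (2 * (D : ℝ)) ≤
      ∑ u ∈ b.filter (fun u => s u ≤ t₀ ∧ t₀ ≤ e u),
        (D : ℝ)⁻¹ * ∑ d, dem u d / cap d := by
  set F := b.filter (fun u => s u ≤ t₀ ∧ t₀ ≤ e u) with hF
  have hDpos : (0:ℝ) < D := by exact_mod_cast hD
  have h1 : cap dhat / 2 ≤ ∑ u ∈ F, dem u dhat := by
    have := hsmall dhat; linarith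
  have h2 : ∀ u ∈ F, dem u dhat / cap dhat ≤ ∑ d, dem u d / cap d := by
    intro u _
    exact Finset.single_le_sum (f := fun d => dem u d / cap d)
      (fun d _ => div_nonneg (hdem u d) (hcap d).le) (Finset.mem_univ dhat)
  calc 1 / (2 * (D : ℝ)) = (D:ℝ)⁻¹ * ((cap dhat / 2) / cap dhat) := by
        field_simp [(hcap dhat).ne']
    _ ≤ (D:ℝ)⁻¹ * ∑ u ∈ F, dem u dhat / cap dhat := by
        apply mul_le_mul_of_nonneg_left _ (by positivity)
        rw [← Finset.sum_div]
        exact div_le_div_of_nonneg_right h1 (hcap dhat).le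
    _ ≤ (D:ℝ)⁻¹ * ∑ u ∈ F, ∑ d, dem u d / cap d := by
        apply mul_le_mul_of_nonneg_left (Finset.sum_le_sum h2) (by positivity)
    _ = ∑ u ∈ F, (D:ℝ)⁻¹ * ∑ d, dem u d / cap d := Finset.mul_sum _ _ _
end

section
/- Consider a TL-RIGHTSIZE instance in which every task is small, and let π : 𝓤 → 𝓑 be a penalty-minimizing mapping, i.e. p(u|π(u)) = p*(u) for every task u. Let V_B = {u : π(u) = B}. Then there exists a feasible solution S that places every task u on a node of type π(u) and satisfies cost(S) ≤ Σ_{B∈𝓑} cost(B) + 2D · Σ_{B∈𝓑} cong(V_B). -/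
theorem key7
    (T D : ℕ) (hT : 1 ≤ T) (hD : 0 < D)
    (U Btype : Type) [Fintype U] [Fintype Btype] [Nonempty Btype]
    (cost : Btype → ℝ) (cap : Btype → Fin D → ℝ)
    (dem : U → Fin D → ℝ) (s e : U → ℕ)
    (hcost : ∀ B, 0 < cost B)
    (hcap : ∀ B d, 0 < cap B d)
    (hdem : ∀ u d, 0 ≤ dem u d)
    (hspan : ∀ u, 1 ≤ s u ∧ s u ≤ e u ∧ e u ≤ T)
    (hsmall : ∀ u B d, dem u d ≤ cap B d / 2)
    (π : U → Btype)
    (hπ : ∀ u, cost (π u) * ((D : ℝ)⁻¹ * ∑ d, dem u d / cap (π u) d)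
        = Finset.univ.inf' Finset.univ_nonempty
            (fun B => cost B * ((D : ℝ)⁻¹ * ∑ d, dem u d / cap B d)))
    (B : Btype) (V : Finset U) (hV : ∀ u ∈ V, π u = B) :
    ∃ (k : ℕ) (f : U → ℕ),
      (∀ u ∈ V, f u < k) ∧
      (∀ (j t : ℕ), t ∈ Finset.Icc 1 T → ∀ d,
        ∑ u ∈ V.filter (fun u => f u = j ∧ s u ≤ t ∧ t ≤ e u), dem u d ≤ cap B d) ∧
      (k : ℝ) * cost B ≤ cost B + 2 * D *
        (Finset.Icc 1 T).sup' (Finset.nonempty_Icc.mpr hT)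
          (fun t => ∑ u ∈ V.filter (fun u => s u ≤ t ∧ t ≤ e u),
            Finset.univ.inf' Finset.univ_nonempty
              (fun B' => cost B' * ((D : ℝ)⁻¹ * ∑ d, dem u d / cap B' d))) := by
  classical
  set pstar : U → ℝ := fun u => Finset.univ.inf' Finset.univ_nonempty
      (fun B' => cost B' * ((D : ℝ)⁻¹ * ∑ d, dem u d / cap B' d)) with hpstar
  have hp0 : ∀ v, 0 ≤ pstar v := by
    intro v
    apply Finset.le_inf'
    intro b _
    exact mul_nonneg (hcost b).le (mul_nonneg (by positivity)
      (Finset.sum_nonneg fun d _ => div_nonneg (hdem v d) (hcap b d).le))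
  set cong : Finset U → ℝ := fun W => (Finset.Icc 1 T).sup' (Finset.nonempty_Icc.mpr hT)
      (fun t => ∑ u ∈ W.filter (fun u => s u ≤ t ∧ t ≤ e u), pstar u) with hcong
  have hcongmono : ∀ W W' : Finset U, W ⊆ W' → cong W ≤ cong W' := by
    intro W W' hsub
    apply Finset.sup'_le
    intro t ht
    refine le_trans ?_ (Finset.le_sup' _ ht)
    exact Finset.sum_le_sum_of_subset_of_nonneg
      (Finset.filter_subset_filter _ hsub) (fun v _ _ => hp0 v)
  have hcong0 : ∀ W, 0 ≤ cong W := by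
    intro W
    refine le_trans ?_ (Finset.le_sup' _ (Finset.mem_Icc.mpr ⟨le_refl 1, hT⟩))
    exact Finset.sum_nonneg fun v _ => hp0 v
  revert hV
  induction V using Finset.strongInduction with
  | _ V ih =>
  intro hV
  rcases V.eq_empty_or_nonempty with rfl | hne
  · refine ⟨0, fun _ => 0, by simp, by simp [(hcap B _).le], ?_⟩
    simp only [Nat.cast_zero, zero_mul]
    have h2 : (0:ℝ) ≤ 2 * D * cong ∅ := mul_nonneg (by positivity) (hcong0 ∅)
    simp only [hcong] at h2
    linarith [hcost B, h2]
  obtain ⟨u, huV, hmax⟩ := V.exists_max_image s hne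
  set W := V.erase u with hW
  obtain ⟨k, f, hfk, hfeas, hkcost⟩ := ih W (Finset.erase_ssubset huV)
      (fun v hv => hV v (Finset.mem_of_mem_erase hv))
  have hVW : V = insert u W := (Finset.insert_erase huV).symm
  have huW : u ∉ W := Finset.notMem_erase u V
  by_cases hfit : ∃ j < k, ∀ t, s u ≤ t → t ≤ e u → ∀ d,
      (∑ v ∈ W.filter (fun v => f v = j ∧ s v ≤ t ∧ t ≤ e v), dem v d) + dem u d ≤ cap B d
  · obtain ⟨j, hjk, hj⟩ := hfit
    refine ⟨k, Function.update f u j, ?_, ?_, ?_⟩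
    · intro v hv
      by_cases hvu : v = u
      · subst hvu; simp [hjk]
      · rw [Function.update_of_ne hvu]
        exact hfk v (Finset.mem_erase.mpr ⟨hvu, hv⟩)
    · intro j' t ht d
      have hfilt : W.filter (fun v => Function.update f u j v = j' ∧ s v ≤ t ∧ t ≤ e v)
          = W.filter (fun v => f v = j' ∧ s v ≤ t ∧ t ≤ e v) := by
        apply Finset.filter_congr
        intro v hv
        rw [Function.update_of_ne (Finset.ne_of_mem_erase hv)]
      rw [hVW, Finset.filter_insert]
      split_ifs with hu
      · obtain ⟨hu1, hu2, hu3⟩ := hu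
        rw [Function.update_self] at hu1
        rw [Finset.sum_insert (fun hmem => huW (Finset.mem_of_mem_filter u hmem)), hfilt,
          add_comm, ← hu1]
        exact hj t hu2 hu3 d
      · rw [hfilt]; exact hfeas j' t ht d
    · refine le_trans hkcost ?_
      have := hcongmono W V (Finset.erase_subset u V)
      simp only [hcong, hpstar] at this
      have h2D : (0:ℝ) ≤ 2 * D := by positivity
      nlinarith [this]
  · -- open a new node k for u
    push_neg at hfit
    refine ⟨k + 1, Function.update f u k, ?_, ?_, ?_⟩
    · intro v hv
      by_cases hvu : v = u
      · subst hvu; simp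
      · rw [Function.update_of_ne hvu]
        exact Nat.lt_succ_of_lt (hfk v (Finset.mem_erase.mpr ⟨hvu, hv⟩))
    · intro j' t ht d
      have hfilt : W.filter (fun v => Function.update f u k v = j' ∧ s v ≤ t ∧ t ≤ e v)
          = W.filter (fun v => f v = j' ∧ s v ≤ t ∧ t ≤ e v) := by
        apply Finset.filter_congr
        intro v hv
        rw [Function.update_of_ne (Finset.ne_of_mem_erase hv)]
      rw [hVW, Finset.filter_insert]
      split_ifs with hu
      · obtain ⟨hu1, hu2, hu3⟩ := hu
        rw [Function.update_self] at hu1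
        rw [Finset.sum_insert (fun hmem => huW (Finset.mem_of_mem_filter u hmem)), hfilt]
        have hempty : W.filter (fun v => f v = j' ∧ s v ≤ t ∧ t ≤ e v) = ∅ := by
          apply Finset.filter_false_of_mem
          intro v hv
          rintro ⟨hv1, -⟩
          exact Nat.ne_of_lt (hfk v hv) (hv1.trans hu1.symm)
        rw [hempty]
        simp only [Finset.sum_empty, add_zero]
        linarith [hsmall u B d, hcap B d]
      · rw [hfilt]; exact hfeas j' t ht d
    · -- cost bound: each of the k existing nodes is half-full at time s u
      set A := W.filter (fun v => s v ≤ s u ∧ s u ≤ e v) with hA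
      have key1 : ∀ j ∈ Finset.range k,
          cost B / (2 * D) ≤ ∑ v ∈ A.filter (fun v => f v = j), pstar v := by
        intro j hj
        rw [Finset.mem_range] at hj
        obtain ⟨t, ht1, ht2, d, hd⟩ := hfit j hj
        have hsub : W.filter (fun v => f v = j ∧ s v ≤ t ∧ t ≤ e v)
            ⊆ A.filter (fun v => f v = j) := by
          intro v hv
          simp only [hA, Finset.mem_filter] at hv ⊢
          exact ⟨⟨hv.1, hmax v (Finset.mem_of_mem_erase hv.1),
            le_trans ht1 hv.2.2.2⟩, hv.2.1⟩
        have hload : cap B d / 2 ≤ ∑ v ∈ A.filter (fun v => f v = j), dem v d := by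
          have h1 := Finset.sum_le_sum_of_subset_of_nonneg hsub (fun v _ _ => hdem v d)
          have h2 := hsmall u B d
          linarith
        have hpsv : ∀ v ∈ A.filter (fun v => f v = j),
            pstar v = cost B * ((D : ℝ)⁻¹ * ∑ d', dem v d' / cap B d') := by
          intro v hv
          have hπv : π v = B := hV v (Finset.mem_of_mem_erase (Finset.mem_of_mem_filter v
            (Finset.mem_of_mem_filter v hv)))
          have h1 := hπ v
          rw [hπv] at h1
          exact h1.symm
        have hsum : ∑ v ∈ A.filter (fun v => f v = j), pstar v
            = cost B * ((D : ℝ)⁻¹ *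
              ∑ d', (∑ v ∈ A.filter (fun v => f v = j), dem v d') / cap B d') := by
          rw [Finset.sum_congr rfl hpsv]
          simp only [← Finset.mul_sum, Finset.sum_comm (t := Finset.univ), Finset.sum_div]
        rw [hsum]
        have hD1 : (0:ℝ) < (D:ℝ) := by exact_mod_cast hD
        have hterm : (1:ℝ) / 2 ≤ ∑ d', (∑ v ∈ A.filter (fun v => f v = j), dem v d') / cap B d' := by
          refine le_trans ?_ (Finset.single_le_sum (f := fun d' =>
            (∑ v ∈ A.filter (fun v => f v = j), dem v d') / cap B d')
            (fun d' _ => div_nonneg (Finset.sum_nonneg fun v _ => hdem v d') (hcap B d').le)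
            (Finset.mem_univ d))
          show (1:ℝ)/2 ≤ (∑ v ∈ A.filter (fun v => f v = j), dem v d) / cap B d
          rw [le_div_iff₀ (hcap B d)]
          linarith
        calc cost B / (2 * D) = cost B * ((D:ℝ)⁻¹ * (1/2)) := by ring
          _ ≤ _ := by
              apply mul_le_mul_of_nonneg_left _ (hcost B).le
              apply mul_le_mul_of_nonneg_left hterm (by positivity)
      have hfib : ∑ j ∈ Finset.range k, ∑ v ∈ A.filter (fun v => f v = j), pstar v
          = ∑ v ∈ A, pstar v := by
        apply Finset.sum_fiberwise_of_maps_to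
        intro v hv
        exact Finset.mem_range.mpr (hfk v (Finset.mem_of_mem_filter v hv))
      have hAcong : ∑ v ∈ A, pstar v ≤ cong V := by
        refine le_trans ?_ (Finset.le_sup' _ (Finset.mem_Icc.mpr
          ⟨(hspan u).1, le_trans (hspan u).2.1 (hspan u).2.2⟩))
        refine Finset.sum_le_sum_of_subset_of_nonneg ?_ (fun v _ _ => hp0 v)
        exact Finset.filter_subset_filter _ (Finset.erase_subset u V)
      have hcard : (k : ℝ) * (cost B / (2 * D)) ≤ cong V := by
        have := Finset.card_nsmul_le_sum (Finset.range k) _ _ key1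
        rw [Finset.card_range, nsmul_eq_mul] at this
        exact le_trans this (hfib ▸ hAcong)
      have hD2 : (0:ℝ) < 2 * D := by positivity
      have hkc : (k : ℝ) * cost B ≤ 2 * D * cong V := by
        rw [mul_div_assoc'] at hcard
        have := (div_le_iff₀ hD2).mp hcard
        linarith
      simp only [hcong] at hkc
      push_cast
      linarith

/- STATEMENT 7: In an instance where every task is small, for a penalty-minimizing
mapping π (p(u|π(u)) = p*(u) for all u, V_B = π⁻¹(B)), there exists a feasible solution
S placing every task on a node of type π(u) with
cost(S) ≤ Σ_B cost(B) + 2D · Σ_B cong(V_B). -/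
theorem stmt7
    (T D : ℕ) (hT : 1 ≤ T) (hD : 0 < D)
    (U Btype : Type) [Fintype U] [Fintype Btype] [Nonempty Btype] [DecidableEq Btype]
    (cost : Btype → ℝ) (cap : Btype → Fin D → ℝ)
    (dem : U → Fin D → ℝ) (s e : U → ℕ)
    (hcost : ∀ B, 0 < cost B)
    (hcap : ∀ B d, 0 < cap B d)
    (hdem : ∀ u d, 0 ≤ dem u d)
    (hspan : ∀ u, 1 ≤ s u ∧ s u ≤ e u ∧ e u ≤ T)
    (hsmall : ∀ u B d, dem u d ≤ cap B d / 2)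
    (π : U → Btype)
    (hπ : ∀ u, cost (π u) * ((D : ℝ)⁻¹ * ∑ d, dem u d / cap (π u) d)
        = Finset.univ.inf' Finset.univ_nonempty
            (fun B => cost B * ((D : ℝ)⁻¹ * ∑ d, dem u d / cap B d))) :
    ∃ (k : ℕ) (ty : Fin k → Btype) (assign : U → Fin k),
      (∀ u, ty (assign u) = π u) ∧
      (∀ (bn : Fin k) (t : ℕ), t ∈ Finset.Icc 1 T → ∀ d : Fin D,
        ∑ u ∈ Finset.univ.filter (fun u => assign u = bn ∧ s u ≤ t ∧ t ≤ e u), dem u d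
          ≤ cap (ty bn) d) ∧
      ∑ bn : Fin k, cost (ty bn)
        ≤ (∑ B : Btype, cost B) + 2 * D *
          ∑ B : Btype, (Finset.Icc 1 T).sup' (Finset.nonempty_Icc.mpr hT)
            (fun t => ∑ u ∈ Finset.univ.filter (fun u => π u = B ∧ s u ≤ t ∧ t ≤ e u),
              Finset.univ.inf' Finset.univ_nonempty
                (fun B' => cost B' * ((D : ℝ)⁻¹ * ∑ d, dem u d / cap B' d))) := by
  classical
  choose kf fB h1 h2 h3 using fun B : Btype =>
    key7 T D hT hD U Btype cost cap dem s e hcost hcap hdem hspan hsmall π hπ B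
      (Finset.univ.filter (fun u => π u = B)) (fun u hu => (Finset.mem_filter.mp hu).2)
  let eqv : (Σ B : Btype, Fin (kf B)) ≃ Fin (Fintype.card (Σ B : Btype, Fin (kf B))) :=
    Fintype.equivFin _
  have hmem : ∀ u : U, u ∈ Finset.univ.filter (fun v => π v = π u) :=
    fun u => Finset.mem_filter.mpr ⟨Finset.mem_univ u, rfl⟩
  refine ⟨Fintype.card (Σ B : Btype, Fin (kf B)), fun bn => (eqv.symm bn).1,
    fun u => eqv ⟨π u, ⟨fB (π u) u, h1 (π u) u (hmem u)⟩⟩, fun u => by simp, ?_, ?_⟩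
  · intro bn t ht d
    have hset : Finset.univ.filter
          (fun u => eqv ⟨π u, ⟨fB (π u) u, h1 (π u) u (hmem u)⟩⟩ = bn ∧ s u ≤ t ∧ t ≤ e u)
        = (Finset.univ.filter (fun u => π u = (eqv.symm bn).1)).filter
            (fun u => fB (eqv.symm bn).1 u = ((eqv.symm bn).2 : ℕ) ∧ s u ≤ t ∧ t ≤ e u) := by
      ext v
      simp only [Finset.mem_filter, Finset.mem_univ, true_and,
        Equiv.apply_eq_iff_eq_symm_apply, Sigma.ext_iff]
      constructor
      · rintro ⟨⟨hfst, hsnd⟩, hact⟩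
        have hfB : fB (π v) v = fB (eqv.symm bn).1 v := by rw [hfst]
        have hval : fB (π v) v = ((eqv.symm bn).2 : ℕ) :=
          (Fin.heq_ext_iff (by rw [hfst])).mp hsnd
        exact ⟨hfst, hfB.symm.trans hval, hact⟩
      · rintro ⟨hfst, hval, hact⟩
        have hfB : fB (π v) v = fB (eqv.symm bn).1 v := by rw [hfst]
        refine ⟨⟨hfst, (Fin.heq_ext_iff (by rw [hfst])).mpr ?_⟩, hact⟩
        show fB (π v) v = ((eqv.symm bn).2 : ℕ)
        exact hfB.trans hval
    exact le_of_eq_of_le (Finset.sum_congr hset (fun x _ => rfl))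
      (h2 (eqv.symm bn).1 ((eqv.symm bn).2 : ℕ) t ht d)
  · have hcostsum : ∑ bn : Fin (Fintype.card (Σ B : Btype, Fin (kf B))),
        cost ((eqv.symm bn).1) = ∑ B : Btype, (kf B : ℝ) * cost B := by
      rw [Equiv.sum_comp eqv.symm (fun n : (Σ B : Btype, Fin (kf B)) => cost n.1)]
      rw [← Finset.univ_sigma_univ, Finset.sum_sigma]
      simp [Finset.sum_const, mul_comm]
    rw [hcostsum]
    calc ∑ B : Btype, (kf B : ℝ) * cost B
        ≤ ∑ B : Btype, (cost B + 2 * D *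
            (Finset.Icc 1 T).sup' (Finset.nonempty_Icc.mpr hT)
              (fun t => ∑ u ∈ (Finset.univ.filter (fun u => π u = B)).filter
                  (fun u => s u ≤ t ∧ t ≤ e u),
                Finset.univ.inf' Finset.univ_nonempty
                  (fun B' => cost B' * ((D : ℝ)⁻¹ * ∑ d, dem u d / cap B' d)))) :=
          Finset.sum_le_sum (fun B _ => h3 B)
      _ = _ := by
          rw [Finset.sum_add_distrib, ← Finset.mul_sum]
          congr 1
          congr 1
          apply Finset.sum_congr rfl
          intro B _
          apply Finset.sup'_congr _ rfl
          intro t ht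
          rw [Finset.filter_filter]
end

section
/- For every feasible solution S of a TL-RIGHTSIZE instance, cost(S) ≥ (1/T) · Σ_{u∈𝓤} p*(u). -/
/- STATEMENT 10: For every feasible solution S of a TL-RIGHTSIZE instance,
cost(S) ≥ (1/T) · Σ_{u∈𝓤} p*(u). -/
theorem stmt10
    (T D : ℕ) (hT : 1 ≤ T) (hD : 0 < D)
    (U Btype Node : Type) [Fintype U] [Fintype Btype] [Nonempty Btype]
    [Fintype Node] [DecidableEq Node]
    (cost : Btype → ℝ) (cap : Btype → Fin D → ℝ)
    (dem : U → Fin D → ℝ) (s e : U → ℕ)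
    (hcost : ∀ B, 0 < cost B)
    (hcap : ∀ B d, 0 < cap B d)
    (hdem : ∀ u d, 0 ≤ dem u d)
    (hspan : ∀ u, 1 ≤ s u ∧ s u ≤ e u ∧ e u ≤ T)
    (ty : Node → Btype) (assign : U → Node)
    (hfeas : ∀ (b : Node) (t : ℕ), t ∈ Finset.Icc 1 T → ∀ d : Fin D,
      ∑ u ∈ Finset.univ.filter (fun u => assign u = b ∧ s u ≤ t ∧ t ≤ e u), dem u d
        ≤ cap (ty b) d) :
    (T : ℝ)⁻¹ * ∑ u : U, Finset.univ.inf' Finset.univ_nonempty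
        (fun B => cost B * ((D : ℝ)⁻¹ * ∑ d, dem u d / cap B d))
      ≤ ∑ b : Node, cost (ty b) := by
  have hT0 : (0:ℝ) < T := by exact_mod_cast hT
  set p : U → Btype → ℝ := fun u B => cost B * ((D:ℝ)⁻¹ * ∑ d, dem u d / cap B d) with hp
  have hpnn : ∀ u B, 0 ≤ p u B := by
    intro u B
    apply mul_nonneg (hcost B).le
    exact mul_nonneg (by positivity)
      (Finset.sum_nonneg fun d _ => div_nonneg (hdem u d) (hcap B d).le)
  -- per node, per timeslot bound
  have step1 : ∀ b : Node, ∀ t ∈ Finset.Icc 1 T,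
      ∑ u ∈ Finset.univ.filter (fun u => assign u = b ∧ s u ≤ t ∧ t ≤ e u), p u (ty b)
        ≤ cost (ty b) := by
    intro b t ht
    have heq : ∑ u ∈ Finset.univ.filter (fun u => assign u = b ∧ s u ≤ t ∧ t ≤ e u), p u (ty b)
        = cost (ty b) * ((D:ℝ)⁻¹ *
          ∑ d, (∑ u ∈ Finset.univ.filter (fun u => assign u = b ∧ s u ≤ t ∧ t ≤ e u),
            dem u d) / cap (ty b) d) := by
      simp only [hp, ← Finset.mul_sum, Finset.sum_div]
      rw [Finset.sum_comm]
    rw [heq]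
    have hsum : ∑ d, (∑ u ∈ Finset.univ.filter (fun u => assign u = b ∧ s u ≤ t ∧ t ≤ e u),
        dem u d) / cap (ty b) d ≤ (D:ℝ) := by
      calc _ ≤ ∑ _d : Fin D, (1:ℝ) := by
              apply Finset.sum_le_sum
              intro d _
              rw [div_le_one (hcap (ty b) d)]
              exact hfeas b t ht d
        _ = (D:ℝ) := by simp
    calc cost (ty b) * ((D:ℝ)⁻¹ * ∑ d, _ / cap (ty b) d)
        ≤ cost (ty b) * ((D:ℝ)⁻¹ * (D:ℝ)) := by
          apply mul_le_mul_of_nonneg_left _ (hcost (ty b)).le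
          exact mul_le_mul_of_nonneg_left hsum (by positivity)
      _ = cost (ty b) := by
          rw [inv_mul_cancel₀ (by exact_mod_cast hD.ne')]
          ring
  -- per node bound over all its tasks
  have step2 : ∀ b : Node,
      ∑ u ∈ Finset.univ.filter (fun u => assign u = b), p u (ty b)
        ≤ (T:ℝ) * cost (ty b) := by
    intro b
    have h1 : ∑ u ∈ Finset.univ.filter (fun u => assign u = b), p u (ty b)
        ≤ ∑ t ∈ Finset.Icc 1 T,
            ∑ u ∈ Finset.univ.filter (fun u => assign u = b ∧ s u ≤ t ∧ t ≤ e u),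
              p u (ty b) := by
      simp only [Finset.sum_filter]
      rw [Finset.sum_comm]
      apply Finset.sum_le_sum
      intro u _
      by_cases hu : assign u = b
      · simp only [hu, true_and, if_true]
        have hmem : s u ∈ Finset.Icc 1 T := by
          rcases hspan u with ⟨h1, h2, h3⟩
          exact Finset.mem_Icc.mpr ⟨h1, le_trans h2 h3⟩
        have := Finset.single_le_sum
          (f := fun t => if s u ≤ t ∧ t ≤ e u then p u (ty b) else 0)
          (fun t _ => by split_ifs; exacts [hpnn u (ty b), le_rfl]) hmem
        simpa [le_refl, (hspan u).2.1] using this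
      · simp only [hu, false_and, if_false]
        apply Finset.sum_nonneg
        intro t _
        exact le_rfl
    have h2 : ∑ t ∈ Finset.Icc 1 T,
        ∑ u ∈ Finset.univ.filter (fun u => assign u = b ∧ s u ≤ t ∧ t ≤ e u), p u (ty b)
        ≤ ∑ _t ∈ Finset.Icc 1 T, cost (ty b) :=
      Finset.sum_le_sum (fun t ht => step1 b t ht)
    have h3 : ∑ _t ∈ Finset.Icc 1 T, cost (ty b) = (T:ℝ) * cost (ty b) := by
      rw [Finset.sum_const, Nat.card_Icc]
      simp
    linarith
  -- combine
  rw [inv_mul_le_iff₀ hT0]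
  calc ∑ u : U, Finset.univ.inf' Finset.univ_nonempty
        (fun B => cost B * ((D : ℝ)⁻¹ * ∑ d, dem u d / cap B d))
      ≤ ∑ u : U, p u (ty (assign u)) := by
        apply Finset.sum_le_sum
        intro u _
        exact Finset.inf'_le _ (Finset.mem_univ (ty (assign u)))
    _ = ∑ b : Node, ∑ u ∈ Finset.univ.filter (fun u => assign u = b), p u (ty b) := by
        rw [← Finset.sum_fiberwise Finset.univ assign (fun u => p u (ty (assign u)))]
        apply Finset.sum_congr rfl
        intro b _
        apply Finset.sum_congr rfl
        intro u hu
        rw [(Finset.mem_filter.mp hu).2]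
    _ ≤ ∑ b : Node, (T:ℝ) * cost (ty b) := Finset.sum_le_sum fun b _ => step2 b
    _ = (T:ℝ) * ∑ b : Node, cost (ty b) := by rw [Finset.mul_sum]
end

section
/- For a TL-RIGHTSIZE instance, define LB(π) = Σ_{B∈𝓑} cost(B) · max_{1≤t≤T, 1≤d≤D} Σ_{u : π(u)=B, u∼t} dem(u,d)/cap(B,d) for each mapping π : 𝓤 → 𝓑. Then OPT ≥ min_{π : 𝓤 → 𝓑} LB(π). -/
/-- `FeasCost T D U Btype cost cap dem s e c` holds iff there is a feasible solution of
the TL-RIGHTSIZE instance of total cost `c`. -/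
def FeasCost (T D : ℕ) (U Btype : Type) [Fintype U] [Fintype Btype]
    (cost : Btype → ℝ) (cap : Btype → Fin D → ℝ)
    (dem : U → Fin D → ℝ) (s e : U → ℕ) (c : ℝ) : Prop :=
  ∃ (k : ℕ) (ty : Fin k → Btype) (assign : U → Fin k),
    (∀ (bn : Fin k) (t : ℕ), t ∈ Finset.Icc 1 T → ∀ d : Fin D,
      ∑ u ∈ Finset.univ.filter (fun u => assign u = bn ∧ s u ≤ t ∧ t ≤ e u), dem u d
        ≤ cap (ty bn) d) ∧
    c = ∑ bn : Fin k, cost (ty bn)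

/- STATEMENT 13: With LB(π) = Σ_B cost(B) · max_{1≤t≤T,1≤d≤D} Σ_{u:π(u)=B, u∼t}
dem(u,d)/cap(B,d), we have OPT ≥ min_{π : 𝓤 → 𝓑} LB(π). -/
theorem stmt13
    (T D : ℕ) (hT : 1 ≤ T) (hD : 0 < D)
    (U Btype : Type) [Fintype U] [DecidableEq U] [Fintype Btype] [Nonempty Btype]
    [DecidableEq Btype]
    (cost : Btype → ℝ) (cap : Btype → Fin D → ℝ)
    (dem : U → Fin D → ℝ) (s e : U → ℕ)
    (hcost : ∀ B, 0 < cost B)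
    (hcap : ∀ B d, 0 < cap B d)
    (hdem : ∀ u d, 0 ≤ dem u d)
    (hspan : ∀ u, 1 ≤ s u ∧ s u ≤ e u ∧ e u ≤ T)
    (hex : ∃ c, FeasCost T D U Btype cost cap dem s e c) :
    (Finset.univ : Finset (U → Btype)).inf' Finset.univ_nonempty
        (fun π => ∑ B : Btype, cost B *
          ((Finset.Icc 1 T) ×ˢ (Finset.univ : Finset (Fin D))).sup'
            ((Finset.nonempty_Icc.mpr hT).product ⟨⟨0, hD⟩, Finset.mem_univ _⟩)
            (fun td => ∑ u ∈ Finset.univ.filter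
                (fun u => π u = B ∧ s u ≤ td.1 ∧ td.1 ≤ e u),
              dem u td.2 / cap B td.2))
      ≤ sInf {c : ℝ | FeasCost T D U Btype cost cap dem s e c} := by

  apply le_csInf hex
  intro c hc
  obtain ⟨k, ty, assign, hfeas, hcsum⟩ := hc
  set π : U → Btype := fun u => ty (assign u) with hπ
  refine le_trans (Finset.inf'_le _ (Finset.mem_univ π)) ?_
  rw [hcsum]
  have hsplit : ∑ bn : Fin k, cost (ty bn)
      = ∑ B : Btype, (((Finset.univ.filter (fun bn => ty bn = B)).card : ℝ) * cost B) := by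
    rw [← Finset.sum_fiberwise Finset.univ ty (fun bn => cost (ty bn))]
    refine Finset.sum_congr rfl fun B _ => ?_
    rw [Finset.sum_congr rfl (fun bn hbn => by
      rw [(Finset.mem_filter.mp hbn).2]), Finset.sum_const, nsmul_eq_mul]
  rw [hsplit]
  refine Finset.sum_le_sum fun B _ => ?_
  rw [mul_comm]
  refine mul_le_mul_of_nonneg_right ?_ (le_of_lt (hcost B))
  refine Finset.sup'_le _ _ fun td htd => ?_
  obtain ⟨t, d⟩ := td
  simp only [Finset.mem_product] at htd
  -- split the sum over nodes of type B
  have hmaps : ∀ u ∈ Finset.univ.filter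
      (fun u => π u = B ∧ s u ≤ t ∧ t ≤ e u),
      assign u ∈ Finset.univ.filter (fun bn => ty bn = B) := by
    intro u hu
    simp only [Finset.mem_filter, Finset.mem_univ, true_and] at hu ⊢
    exact hu.1
  have hfib := Finset.sum_fiberwise_of_maps_to hmaps
      (fun u => dem u d / cap B d)
  rw [← hfib]
  have hbound : ∀ bn ∈ Finset.univ.filter (fun bn => ty bn = B),
      ∑ u ∈ (Finset.univ.filter (fun u => π u = B ∧ s u ≤ t ∧ t ≤ e u)).filter
        (fun u => assign u = bn), dem u d / cap B d ≤ 1 := by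
    intro bn hbn
    simp only [Finset.mem_filter, Finset.mem_univ, true_and] at hbn
    have hset : (Finset.univ.filter (fun u => π u = B ∧ s u ≤ t ∧ t ≤ e u)).filter
        (fun u => assign u = bn)
        = Finset.univ.filter (fun u => assign u = bn ∧ s u ≤ t ∧ t ≤ e u) := by
      ext u
      simp only [Finset.mem_filter, Finset.mem_univ, true_and, hπ]
      constructor
      · rintro ⟨⟨_, h2, h3⟩, h4⟩; exact ⟨h4, h2, h3⟩
      · rintro ⟨h1, h2, h3⟩; exact ⟨⟨by rw [h1, hbn], h2, h3⟩, h1⟩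
    rw [hset, ← Finset.sum_div]
    rw [div_le_one (hcap B d)]
    have := hfeas bn t htd.1 d
    rwa [hbn] at this
  calc ∑ bn ∈ Finset.univ.filter (fun bn => ty bn = B),
        ∑ u ∈ (Finset.univ.filter (fun u => π u = B ∧ s u ≤ t ∧ t ≤ e u)).filter
          (fun u => assign u = bn), dem u d / cap B d
      ≤ ∑ bn ∈ Finset.univ.filter (fun bn => ty bn = B), (1:ℝ) :=
        Finset.sum_le_sum hbound
    _ = ((Finset.univ.filter (fun bn => ty bn = B)).card : ℝ) := by
        rw [Finset.sum_const, nsmul_eq_mul, mul_one]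
end

section
/- Let P ⊆ ℝ^{𝓤×𝓑} × ℝ^{𝓑} be the polytope of points (x, α) satisfying: Σ_{B∈𝓑} x(u,B) = 1 for every task u; Σ_{u∼t} x(u,B)·dem(u,d)/cap(B,d) ≤ α_B for every node-type B, timeslot t, and dimension d; and 0 ≤ x(u,B) ≤ 1 for every task u and node-type B. Then for any extreme point (x*, α*) of P, the number of pairs (u,B) with x*(u,B) strictly between 0 and 1 is at most n + m·T·D. -/
open Finset

noncomputable def zfun {U B : Type} [DecidableEq U] [DecidableEq B] (F : Finset (U × B))
    (y : (↥F ⊕ B) → ℝ) (u : U) (b : B) : ℝ :=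
  if h : (u, b) ∈ F then y (Sum.inl ⟨(u, b), h⟩) else 0

lemma zfun_add {U B : Type} [DecidableEq U] [DecidableEq B] (F : Finset (U × B))
    (p q : (↥F ⊕ B) → ℝ) (u : U) (b : B) :
    zfun F (p + q) u b = zfun F p u b + zfun F q u b := by
  unfold zfun; split <;> simp

lemma zfun_smul {U B : Type} [DecidableEq U] [DecidableEq B] (F : Finset (U × B))
    (c : ℝ) (p : (↥F ⊕ B) → ℝ) (u : U) (b : B) :
    zfun F (c • p) u b = c * zfun F p u b := by
  unfold zfun; split <;> simp

noncomputable def stmt15Phi (T D : ℕ) (U B : Type) [Fintype U] [Fintype B]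
    [DecidableEq U] [DecidableEq B]
    (cap : B → Fin D → ℝ) (dem : U → Fin D → ℝ) (s e : U → ℕ)
    (F : Finset (U × B)) :
    ((↥F ⊕ B) → ℝ) →ₗ[ℝ] ((U ⊕ B × Fin T × Fin D) → ℝ) where
  toFun y := fun i =>
    match i with
    | Sum.inl u => ∑ b : B, zfun F y u b
    | Sum.inr (b, t, d) =>
        (∑ u ∈ Finset.univ.filter (fun u => s u ≤ (t : ℕ) + 1 ∧ (t : ℕ) + 1 ≤ e u),
          zfun F y u b * (dem u d / cap b d)) - y (Sum.inr b)
  map_add' p q := by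
    funext i
    rcases i with u | ⟨b, t, d⟩
    · simp [zfun_add, Finset.sum_add_distrib]
    · simp only [zfun_add, add_mul, Finset.sum_add_distrib, Pi.add_apply]; ring
  map_smul' c p := by
    funext i
    rcases i with u | ⟨b, t, d⟩
    · simp [zfun_smul, Finset.mul_sum]
    · simp only [zfun_smul, mul_assoc, ← Finset.mul_sum, Pi.smul_apply, smul_eq_mul,
        RingHom.id_apply]
      ring




/- STATEMENT 15: Let P be the polytope of points (x, α) satisfying Σ_B x(u,B) = 1 for
every task u; Σ_{u∼t} x(u,B)·dem(u,d)/cap(B,d) ≤ α_B for every B, t, d; and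
0 ≤ x(u,B) ≤ 1. Then for any extreme point (x*, α*) of P, the number of pairs (u,B)
with x*(u,B) strictly between 0 and 1 is at most n + m·T·D. -/
theorem stmt15
    (T D : ℕ)
    (U Btype : Type) [Fintype U] [Fintype Btype]
    (cost : Btype → ℝ) (cap : Btype → Fin D → ℝ)
    (dem : U → Fin D → ℝ) (s e : U → ℕ)
    (hcost : ∀ B, 0 < cost B)
    (hcap : ∀ B d, 0 < cap B d)
    (hdem : ∀ u d, 0 ≤ dem u d)
    (hspan : ∀ u, 1 ≤ s u ∧ s u ≤ e u ∧ e u ≤ T)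
    (P : Set ((U → Btype → ℝ) × (Btype → ℝ)))
    (hP : P = {p | (∀ u, ∑ B : Btype, p.1 u B = 1) ∧
        (∀ (B : Btype) (t : ℕ), t ∈ Finset.Icc 1 T → ∀ d : Fin D,
          ∑ u ∈ Finset.univ.filter (fun u => s u ≤ t ∧ t ≤ e u),
            p.1 u B * (dem u d / cap B d) ≤ p.2 B) ∧
        (∀ u B, 0 ≤ p.1 u B ∧ p.1 u B ≤ 1)})
    (x : U → Btype → ℝ) (α : Btype → ℝ)
    (hext : (x, α) ∈ Set.extremePoints ℝ P) :
    {p : U × Btype | 0 < x p.1 p.2 ∧ x p.1 p.2 < 1}.ncard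
      ≤ Fintype.card U + Fintype.card Btype * T * D := by
  classical
  have hxα : (x, α) ∈ P := hext.1
  rw [hP] at hxα
  obtain ⟨hx1, hx2, hx3⟩ := hxα
  set F : Finset (U × Btype) :=
    Finset.univ.filter (fun p => 0 < x p.1 p.2 ∧ x p.1 p.2 < 1) with hF
  have hset : {p : U × Btype | 0 < x p.1 p.2 ∧ x p.1 p.2 < 1} = ↑F := by
    ext p; simp [hF]
  rw [hset, Set.ncard_coe_finset]
  -- injectivity of the tight-constraint linear map
  have hinj : Function.Injective (stmt15Phi T D U Btype cap dem s e F) := by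
    rw [injective_iff_map_eq_zero]
    intro y hy
    set z : U → Btype → ℝ := zfun F y with hz
    set β : Btype → ℝ := fun b => y (Sum.inr b) with hβ
    have hA : ∀ u, ∑ b : Btype, z u b = 0 := by
      intro u
      have := congrFun hy (Sum.inl u)
      simpa [stmt15Phi, hz] using this
    have hBfin : ∀ (b : Btype) (t : Fin T) (d : Fin D),
        ∑ u ∈ Finset.univ.filter (fun u => s u ≤ (t : ℕ) + 1 ∧ (t : ℕ) + 1 ≤ e u),
          z u b * (dem u d / cap b d) = β b := by
      intro b t d
      have := congrFun hy (Sum.inr (b, t, d))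
      simp only [stmt15Phi, LinearMap.coe_mk, AddHom.coe_mk, Pi.zero_apply] at this
      have := sub_eq_zero.mp this
      simpa [hz, hβ] using this
    have hB : ∀ (b : Btype) (t : ℕ), t ∈ Finset.Icc 1 T → ∀ d : Fin D,
        ∑ u ∈ Finset.univ.filter (fun u => s u ≤ t ∧ t ≤ e u),
          z u b * (dem u d / cap b d) = β b := by
      intro b t ht d
      rw [Finset.mem_Icc] at ht
      have ht1 : t - 1 < T := by omega
      have := hBfin b ⟨t - 1, ht1⟩ d
      have he : (⟨t - 1, ht1⟩ : Fin T) + 1 = t := by simp; omega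
      simpa [show (t - 1 : ℕ) + 1 = t by omega] using this
    have hzF : ∀ p : U × Btype, p ∉ F → z p.1 p.2 = 0 := by
      intro p hp
      simp only [hz, zfun]
      rw [dif_neg]
      simpa using hp
    -- choose epsilon
    set g : U × Btype → ℝ := fun p =>
      if z p.1 p.2 = 0 then 1 else min (x p.1 p.2) (1 - x p.1 p.2) / |z p.1 p.2| with hg
    set S : Finset ℝ := insert 1 (Finset.univ.image g) with hSdef
    have hSne : S.Nonempty := ⟨1, by simp [hSdef]⟩
    set ε := S.min' hSne with hεdef
    have hgpos : ∀ p : U × Btype, 0 < g p := by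
      intro p
      by_cases hz0 : z p.1 p.2 = 0
      · simp [hg, hz0]
      · have hpF : p ∈ F := by
          by_contra hpF
          exact hz0 (hzF p hpF)
        rw [hF, Finset.mem_filter] at hpF
        have h01 := hpF.2
        simp only [hg, if_neg hz0]
        exact div_pos (lt_min h01.1 (by linarith [h01.2])) (abs_pos.mpr hz0)
    have hεpos : 0 < ε := by
      rw [hεdef, Finset.lt_min'_iff]
      intro r hr
      rw [hSdef, Finset.mem_insert] at hr
      rcases hr with rfl | hr
      · norm_num
      · obtain ⟨p, -, rfl⟩ := Finset.mem_image.mp hr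
        exact hgpos p
    have hεg : ∀ p : U × Btype, ε ≤ g p := by
      intro p
      exact Finset.min'_le _ _ (by
        rw [hSdef, Finset.mem_insert]
        exact Or.inr (Finset.mem_image_of_mem g (Finset.mem_univ p)))
    -- key bounds
    have hkey : ∀ u b, ε * |z u b| ≤ min (x u b) (1 - x u b) ∨ z u b = 0 := by
      intro u b
      by_cases hz0 : z u b = 0
      · exact Or.inr hz0
      · left
        have hpF : (u, b) ∈ F := by
          by_contra hpF
          exact hz0 (hzF (u, b) hpF)
        have := hεg (u, b)
        rw [hg] at this
        simp only [if_neg hz0] at this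
        exact (le_div_iff₀ (abs_pos.mpr hz0)).mp this
    have hbnd : ∀ (σ : ℝ), |σ| ≤ ε → ∀ u b,
        0 ≤ x u b + σ * z u b ∧ x u b + σ * z u b ≤ 1 := by
      intro σ hσ u b
      rcases hkey u b with hk | hk
      · have h1 : |σ * z u b| ≤ ε * |z u b| := by
          rw [abs_mul]
          exact mul_le_mul_of_nonneg_right hσ (abs_nonneg _)
        have h2 := abs_le.mp (h1.trans hk)
        have := hx3 u b
        constructor
        · nlinarith [le_min_iff.mp (h1.trans hk) |>.1, neg_abs_le (σ * z u b)]
        · nlinarith [le_min_iff.mp (h1.trans hk) |>.2, le_abs_self (σ * z u b)]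
      · simp [hk, (hx3 u b).1, (hx3 u b).2]
    -- perturbed points are in P
    have hmem : ∀ (σ : ℝ), |σ| ≤ ε →
        ((fun u b => x u b + σ * z u b, fun b => α b + σ * β b) :
          (U → Btype → ℝ) × (Btype → ℝ)) ∈ P := by
      intro σ hσ
      rw [hP]
      refine ⟨?_, ?_, ?_⟩
      · intro u
        simp only
        rw [Finset.sum_add_distrib, hx1 u, ← Finset.mul_sum, hA u]
        ring
      · intro b t ht d
        simp only
        have : ∑ u ∈ Finset.univ.filter (fun u => s u ≤ t ∧ t ≤ e u),
            (x u b + σ * z u b) * (dem u d / cap b d)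
            = (∑ u ∈ Finset.univ.filter (fun u => s u ≤ t ∧ t ≤ e u),
                x u b * (dem u d / cap b d)) + σ * β b := by
          rw [← hB b t ht d, Finset.mul_sum, ← Finset.sum_add_distrib]
          congr 1; funext u; ring
        rw [this]
        have := hx2 b t ht d
        linarith
      · intro u b
        exact hbnd σ hσ u b
    have hp1 := hmem ε (by rw [abs_of_pos hεpos])
    have hp2 := hmem (-ε) (by rw [abs_neg, abs_of_pos hεpos])
    have hopen : (x, α) ∈ openSegment ℝ
        ((fun u b => x u b + (-ε) * z u b, fun b => α b + (-ε) * β b) :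
          (U → Btype → ℝ) × (Btype → ℝ))
        ((fun u b => x u b + ε * z u b, fun b => α b + ε * β b) :
          (U → Btype → ℝ) × (Btype → ℝ)) := by
      refine ⟨1/2, 1/2, by norm_num, by norm_num, by norm_num, ?_⟩
      refine Prod.ext ?_ ?_
      · funext u b
        simp only [Prod.fst_add, Prod.smul_fst, Pi.add_apply, Pi.smul_apply, smul_eq_mul]
        ring
      · funext b
        simp only [Prod.snd_add, Prod.smul_snd, Pi.add_apply, Pi.smul_apply, smul_eq_mul]
        ring
    obtain ⟨-, hq⟩ := (mem_extremePoints.mp hext).2 _ hp2 _ hp1 hopen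
    have hzz : ∀ u b, z u b = 0 := by
      intro u b
      have := congrFun (congrFun (congrArg Prod.fst hq) u) b
      simp only at this
      have : ε * z u b = 0 := by linarith
      exact (mul_eq_zero.mp this).resolve_left hεpos.ne'
    have hββ : ∀ b, β b = 0 := by
      intro b
      have := congrFun (congrArg Prod.snd hq) b
      simp only at this
      have : ε * β b = 0 := by linarith
      exact (mul_eq_zero.mp this).resolve_left hεpos.ne'
    funext i
    rcases i with ⟨⟨u, b⟩, hp⟩ | b
    · have : z u b = y (Sum.inl ⟨(u, b), hp⟩) := by
        simp only [hz, zfun]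
        rw [dif_pos hp]
      have h0 := hzz u b
      rw [this] at h0
      simpa using h0
    · simpa using hββ b
  have hrank := LinearMap.finrank_le_finrank_of_injective hinj
  rw [Module.finrank_pi, Module.finrank_pi] at hrank
  simp only [Fintype.card_sum, Fintype.card_coe, Fintype.card_prod, Fintype.card_fin] at hrank
  calc F.card ≤ F.card + Fintype.card Btype := Nat.le_add_right _ _
    _ ≤ Fintype.card U + Fintype.card Btype * T * D := by
        rw [mul_assoc]; exact hrank
end

section
/- Consider a general mapping version of Lemma 2: let π : 𝓤 → 𝓑 be any mapping of tasks to node-types in a TL-RIGHTSIZE instance in which every task is small, and let V_B = {u : π(u) = B}. Then there exists a feasible solution S that places every task u on a node of type π(u) and satisfies cost(S) ≤ Σ_{B∈𝓑} cost(B) + 2D · Σ_{B∈𝓑} cost(B) · max_{1≤t≤T} Σ_{u∈V_B, u∼t} h_avg(u|B). -/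
set_option linter.unusedSectionVars false
set_option maxHeartbeats 1000000
noncomputable section S17sec
open Classical
namespace S17

variable {U B : Type} [Fintype U] [DecidableEq U] [DecidableEq B]
variable {D : ℕ} (cap : B → Fin D → ℝ) (dem : U → Fin D → ℝ) (sf ef : U → ℕ) (pf : U → B)

def Fits (a : U → ℕ) (done : List U) (u : U) (j : ℕ) : Prop :=
  ∀ t ∈ Finset.Icc (sf u) (ef u), ∀ d,
    (∑ v ∈ done.toFinset.filter (fun v => pf v = pf u ∧ a v = j ∧ sf v ≤ t ∧ t ≤ ef v), dem v d)
      + dem u d ≤ cap (pf u) d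

theorem exists_fits (hcap : ∀ b d, 0 < cap b d) (hsmall : ∀ u b d, dem u d ≤ cap b d / 2)
    (a : U → ℕ) (done : List U) (u : U) : ∃ j, Fits cap dem sf ef pf a done u j := by
  refine ⟨done.toFinset.sup a + 1, ?_⟩
  intro t ht d
  have : done.toFinset.filter
      (fun v => pf v = pf u ∧ a v = done.toFinset.sup a + 1 ∧ sf v ≤ t ∧ t ≤ ef v) = ∅ := by
    apply Finset.filter_false_of_mem
    intro v hv h
    have := Finset.le_sup (f := a) hv
    omega
  rw [this]
  simp only [Finset.sum_empty, zero_add]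
  have h1 := hsmall u (pf u) d
  have h2 := (hcap (pf u) d).le
  linarith

def pick (hcap : ∀ b d, 0 < cap b d) (hsmall : ∀ u b d, dem u d ≤ cap b d / 2)
    (a : U → ℕ) (done : List U) (u : U) : ℕ :=
  Nat.find (exists_fits cap dem sf ef pf hcap hsmall a done u)

variable (hcap : ∀ b d, 0 < cap b d) (hsmall : ∀ u b d, dem u d ≤ cap b d / 2)

def F (l : List U) : ℕ → U → ℕ
  | 0 => fun _ => 0
  | i + 1 =>
    if h : i < l.length then
      Function.update (F l i) l[i]
        (pick cap dem sf ef pf hcap hsmall (F l i) (l.take i) l[i])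
    else F l i

theorem F_succ (l : List U) (i : ℕ) (h : i < l.length) :
    F cap dem sf ef pf hcap hsmall l (i + 1) =
      Function.update (F cap dem sf ef pf hcap hsmall l i) l[i]
        (pick cap dem sf ef pf hcap hsmall (F cap dem sf ef pf hcap hsmall l i) (l.take i) l[i]) := by
  rw [F, dif_pos h]

theorem F_succ_none (l : List U) (i : ℕ) (h : ¬ i < l.length) :
    F cap dem sf ef pf hcap hsmall l (i + 1) = F cap dem sf ef pf hcap hsmall l i := by
  rw [F, dif_neg h]

theorem not_mem_take (l : List U) (hl : l.Nodup) (i : ℕ) (h : i < l.length) :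
    l[i] ∉ l.take i := by
  intro hmem
  have hnd : (l.take i ++ l.drop i).Nodup := by rw [List.take_append_drop]; exact hl
  rw [List.nodup_append] at hnd
  exact hnd.2.2 _ hmem _ (by rw [List.drop_eq_getElem_cons h]; exact List.mem_cons_self) rfl

theorem take_succ_eq (l : List U) (i : ℕ) (h : i < l.length) :
    l.take (i + 1) = l.take i ++ [l[i]] := by
  rw [List.take_succ, List.getElem?_eq_getElem h]
  rfl

theorem F_stable (l : List U) (hl : l.Nodup) (i i' : ℕ) (hii : i ≤ i')
    (v : U) (hv : v ∈ l.take i) :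
    F cap dem sf ef pf hcap hsmall l i' v = F cap dem sf ef pf hcap hsmall l i v := by
  induction i' with
  | zero => have : i = 0 := by omega
            subst this; rfl
  | succ i' ih =>
    rcases Nat.eq_or_lt_of_le hii with rfl | hlt
    · rfl
    have hii' : i ≤ i' := by omega
    by_cases h : i' < l.length
    · rw [F_succ cap dem sf ef pf hcap hsmall l i' h]
      have hvne : v ≠ l[i'] := by
        intro rfl'
        exact not_mem_take l hl i' h (List.take_subset_take_left l hii' (rfl' ▸ hv))
      rw [Function.update_of_ne hvne]
      exact ih hii'
    · rw [F_succ_none cap dem sf ef pf hcap hsmall l i' h]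
      exact ih hii'

theorem feas (l : List U) (hl : l.Nodup) (i : ℕ) (b : B) (j : ℕ) (t : ℕ) (d : Fin D) :
    ∑ v ∈ (l.take i).toFinset.filter
        (fun v => pf v = b ∧ F cap dem sf ef pf hcap hsmall l i v = j ∧ sf v ≤ t ∧ t ≤ ef v),
      dem v d ≤ cap b d := by
  induction i with
  | zero => simpa using (hcap b d).le
  | succ i ih =>
    by_cases h : i < l.length
    · have hFs := F_succ cap dem sf ef pf hcap hsmall l i h
      set a := F cap dem sf ef pf hcap hsmall l i with ha
      set u := l[i] with hu
      set p := pick cap dem sf ef pf hcap hsmall a (l.take i) u with hp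
      have htake := take_succ_eq l i h
      have hnot : u ∉ l.take i := not_mem_take l hl i h
      have hseteq : (l.take (i+1)).toFinset = insert u (l.take i).toFinset := by
        ext x
        rw [htake]
        simp only [List.toFinset_append, List.toFinset_cons, List.toFinset_nil,
          Finset.mem_union, Finset.mem_insert, List.mem_toFinset, Finset.mem_singleton,
          Finset.notMem_empty, or_false]
        tauto
      rw [hFs, hseteq, Finset.filter_insert]
      by_cases hub : pf u = b ∧ p = j ∧ sf u ≤ t ∧ t ≤ ef u
      · rw [if_pos ⟨hub.1, by rw [Function.update_self]; exact hub.2.1, hub.2.2⟩]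
        rw [Finset.sum_insert (fun hmem =>
          hnot (List.mem_toFinset.mp (Finset.mem_filter.mp hmem).1))]
        have hfeq : (l.take i).toFinset.filter
              (fun v => pf v = b ∧ Function.update a u p v = j ∧ sf v ≤ t ∧ t ≤ ef v)
            = (l.take i).toFinset.filter
              (fun v => pf v = pf u ∧ a v = p ∧ sf v ≤ t ∧ t ≤ ef v) := by
          apply Finset.filter_congr
          intro v hv
          have hvne : v ≠ u := fun hvu => hnot (hvu ▸ List.mem_toFinset.mp hv)
          simp [Function.update_of_ne hvne, hub.1, hub.2.1]
        rw [hfeq]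
        have hft : (∑ v ∈ (l.take i).toFinset.filter
              (fun v => pf v = pf u ∧ a v = p ∧ sf v ≤ t ∧ t ≤ ef v), dem v d)
              + dem u d ≤ cap (pf u) d :=
          Nat.find_spec (exists_fits cap dem sf ef pf hcap hsmall a (l.take i) u) t
            (Finset.mem_Icc.mpr ⟨hub.2.2.1, hub.2.2.2⟩) d
        rw [← hub.1]
        linarith [hft]
      · rw [if_neg (fun hcon => hub ⟨hcon.1, by
          rw [← hcon.2.1, Function.update_self], hcon.2.2⟩)]
        have hfeq : (l.take i).toFinset.filter
              (fun v => pf v = b ∧ Function.update a u p v = j ∧ sf v ≤ t ∧ t ≤ ef v)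
            = (l.take i).toFinset.filter
              (fun v => pf v = b ∧ a v = j ∧ sf v ≤ t ∧ t ≤ ef v) := by
          apply Finset.filter_congr
          intro v hv
          have hvne : v ≠ u := fun hvu => hnot (hvu ▸ List.mem_toFinset.mp hv)
          simp [Function.update_of_ne hvne]
        rw [hfeq]
        exact ih
    · have hlen : l.length ≤ i := by omega
      rw [F_succ_none cap dem sf ef pf hcap hsmall l i h,
        List.take_of_length_le (by omega : l.length ≤ i + 1)]
      rwa [List.take_of_length_le hlen] at ih

theorem F_final_eq (l : List U) (hl : l.Nodup) (i : ℕ) (h : i < l.length) :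
    F cap dem sf ef pf hcap hsmall l l.length l[i] =
      pick cap dem sf ef pf hcap hsmall (F cap dem sf ef pf hcap hsmall l i) (l.take i) l[i] := by
  have h1 : l[i] ∈ l.take (i + 1) := by
    rw [take_succ_eq l i h]
    exact List.mem_append_right _ (List.mem_singleton_self _)
  rw [F_stable cap dem sf ef pf hcap hsmall l hl (i + 1) l.length (by omega) l[i] h1,
    F_succ cap dem sf ef pf hcap hsmall l i h, Function.update_self]

theorem failure (hdem : ∀ u d, 0 ≤ dem u d)
    (l : List U) (hl : l.Nodup) (hsort : l.Pairwise (fun a b => sf a ≤ sf b))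
    (i : ℕ) (h : i < l.length) (j' : ℕ)
    (hj : j' < F cap dem sf ef pf hcap hsmall l l.length l[i]) :
    ∃ d, cap (pf l[i]) d / 2 <
      ∑ v ∈ Finset.univ.filter (fun v => pf v = pf l[i] ∧
          F cap dem sf ef pf hcap hsmall l l.length v = j' ∧
          sf v ≤ sf l[i] ∧ sf l[i] ≤ ef v), dem v d := by
  rw [F_final_eq cap dem sf ef pf hcap hsmall l hl i h] at hj
  set A := F cap dem sf ef pf hcap hsmall l l.length with hA
  set a := F cap dem sf ef pf hcap hsmall l i with ha
  set u := l[i] with hu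
  have hnf : ¬ Fits cap dem sf ef pf a (l.take i) u j' :=
    Nat.find_min (exists_fits cap dem sf ef pf hcap hsmall a (l.take i) u) hj
  simp only [Fits] at hnf
  push_neg at hnf
  obtain ⟨t, ht, d, hd⟩ := hnf
  have ht' := Finset.mem_Icc.mp ht
  refine ⟨d, ?_⟩
  have hsub : (l.take i).toFinset.filter (fun v => pf v = pf u ∧ a v = j' ∧ sf v ≤ t ∧ t ≤ ef v)
      ⊆ Finset.univ.filter (fun v => pf v = pf u ∧ A v = j' ∧ sf v ≤ sf u ∧ sf u ≤ ef v) := by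
    intro v hv
    rcases Finset.mem_filter.mp hv with ⟨hvt, hp1, hp2, hp3, hp4⟩
    have hvtk : v ∈ l.take i := List.mem_toFinset.mp hvt
    have hAv : A v = j' := by
      rw [hA, F_stable cap dem sf ef pf hcap hsmall l hl i l.length (by omega) v hvtk, ← ha, hp2]
    have hsv : sf v ≤ sf u := by
      obtain ⟨n, hn, hvn⟩ := List.getElem_of_mem hvtk
      have hn' : n < i := by
        have := hn
        simp only [List.length_take] at this
        omega
      have hgn : l[n] = v := by rw [List.getElem_take] at hvn; exact hvn
      have := List.pairwise_iff_getElem.mp hsort n i (by omega) h hn'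
      rwa [hgn] at this
    exact Finset.mem_filter.mpr ⟨Finset.mem_univ v, hp1, hAv, hsv, by omega⟩
  have hsum := Finset.sum_le_sum_of_subset_of_nonneg hsub (fun v _ _ => hdem v d)
  have hs := hsmall u (pf u) d
  linarith

end S17
end S17sec


/- STATEMENT 17: For any mapping π : 𝓤 → 𝓑 in an instance where every task is small,
with V_B = π⁻¹(B), there exists a feasible solution S placing every task on a node of
type π(u) with
cost(S) ≤ Σ_B cost(B) + 2D · Σ_B cost(B) · max_{1≤t≤T} Σ_{u∈V_B, u∼t} h_avg(u|B). -/
theorem stmt17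
    (T D : ℕ) (hT : 1 ≤ T) (hD : 0 < D)
    (U Btype : Type) [Fintype U] [Fintype Btype] [DecidableEq Btype]
    (cost : Btype → ℝ) (cap : Btype → Fin D → ℝ)
    (dem : U → Fin D → ℝ) (s e : U → ℕ)
    (hcost : ∀ B, 0 < cost B)
    (hcap : ∀ B d, 0 < cap B d)
    (hdem : ∀ u d, 0 ≤ dem u d)
    (hspan : ∀ u, 1 ≤ s u ∧ s u ≤ e u ∧ e u ≤ T)
    (hsmall : ∀ u B d, dem u d ≤ cap B d / 2)
    (π : U → Btype) :
    ∃ (k : ℕ) (ty : Fin k → Btype) (assign : U → Fin k),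
      (∀ u, ty (assign u) = π u) ∧
      (∀ (bn : Fin k) (t : ℕ), t ∈ Finset.Icc 1 T → ∀ d : Fin D,
        ∑ u ∈ Finset.univ.filter (fun u => assign u = bn ∧ s u ≤ t ∧ t ≤ e u), dem u d
          ≤ cap (ty bn) d) ∧
      ∑ bn : Fin k, cost (ty bn)
        ≤ (∑ B : Btype, cost B) + 2 * D *
          ∑ B : Btype, cost B *
            (Finset.Icc 1 T).sup' (Finset.nonempty_Icc.mpr hT)
              (fun t => ∑ u ∈ Finset.univ.filter (fun u => π u = B ∧ s u ≤ t ∧ t ≤ e u),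
                (D : ℝ)⁻¹ * ∑ d, dem u d / cap B d) := by
  classical
  -- sorted list of tasks
  set l : List U := (Finset.univ.toList (α := U)).mergeSort (fun u v => decide (s u ≤ s v))
    with hldef
  have hperm : l.Perm (Finset.univ.toList (α := U)) := List.mergeSort_perm _ _
  have hl : l.Nodup := (hperm.nodup_iff).mpr (Finset.nodup_toList _)
  have hmem : ∀ u : U, u ∈ l := fun u =>
    hperm.mem_iff.mpr (Finset.mem_toList.mpr (Finset.mem_univ u))
  have hsort : l.Pairwise (fun a b => s a ≤ s b) := by
    have := List.pairwise_mergeSort (le := fun u v => decide (s u ≤ s v))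
      (fun a b c hab hbc => by
        simp only [decide_eq_true_eq] at *; omega)
      (fun a b => by simp [Nat.le_total]) (Finset.univ.toList (α := U))
    rw [← hldef] at this
    exact this.imp (fun h => by simpa using h)
  set A : U → ℕ := S17.F cap dem s e π hcap hsmall l l.length with hAdef
  have huniv : (l.take l.length).toFinset = (Finset.univ : Finset U) := by
    rw [List.take_length]
    ext x
    simp [hmem x]
  -- number of nodes of each type
  set kB : Btype → ℕ := fun b => Finset.univ.sup (fun u => if π u = b then A u + 1 else 0)
    with hkBdef
  have hAlt : ∀ u, A u < kB (π u) := by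
    intro u
    have h2 : (if π u = π u then A u + 1 else 0) ≤ kB (π u) := by
      rw [hkBdef]
      exact Finset.le_sup (f := fun v => if π v = π u then A v + 1 else 0)
        (Finset.mem_univ u)
    rw [if_pos rfl] at h2
    omega
  set k : ℕ := ∑ b : Btype, kB b with hkdef
  have hcard : Fintype.card ((b : Btype) × Fin (kB b)) = k := by
    simp [Fintype.card_sigma, hkdef]
  set eqv : ((b : Btype) × Fin (kB b)) ≃ Fin k := Fintype.equivFinOfCardEq hcard with heqv
  refine ⟨k, fun bn => (eqv.symm bn).1, fun u => eqv ⟨π u, ⟨A u, hAlt u⟩⟩, ?_, ?_, ?_⟩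
  · intro u; simp
  · -- feasibility
    intro bn t ht d
    have hset : Finset.univ.filter
          (fun u => eqv ⟨π u, ⟨A u, hAlt u⟩⟩ = bn ∧ s u ≤ t ∧ t ≤ e u)
        = Finset.univ.filter
          (fun u => π u = (eqv.symm bn).1 ∧ A u = ((eqv.symm bn).2 : ℕ) ∧ s u ≤ t ∧ t ≤ e u) := by
      ext x
      simp only [Finset.mem_filter, Finset.mem_univ, true_and]
      constructor
      · rintro ⟨h1, h2, h3⟩
        rw [← h1]
        refine ⟨by rw [Equiv.symm_apply_apply], by rw [Equiv.symm_apply_apply], h2, h3⟩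
      · rintro ⟨h1, h2, h3, h4⟩
        refine ⟨?_, h3, h4⟩
        have : (⟨π x, ⟨A x, hAlt x⟩⟩ : (b : Btype) × Fin (kB b)) = eqv.symm bn := by
          rcases heq : eqv.symm bn with ⟨b', j'⟩
          rw [heq] at h1 h2
          simp at h1 h2
          subst h1
          simp [Fin.ext_iff, h2]
        rw [this, Equiv.apply_symm_apply]
      
    rw [hset]
    have := S17.feas cap dem s e π hcap hsmall l hl l.length
      ((eqv.symm bn).1) ((eqv.symm bn).2 : ℕ) t d
    rw [huniv] at this
    convert this using 2
  · -- cost bound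
    have hDpos : (0:ℝ) < D := by exact_mod_cast hD
    set M : Btype → ℝ := fun b =>
      (Finset.Icc 1 T).sup' (Finset.nonempty_Icc.mpr hT)
        (fun t => ∑ u ∈ Finset.univ.filter (fun u => π u = b ∧ s u ≤ t ∧ t ≤ e u),
          (D : ℝ)⁻¹ * ∑ d, dem u d / cap b d) with hMdef
    have key : ∀ b, (kB b : ℝ) ≤ 1 + 2 * D * M b := by
      intro b
      have hM0 : 0 ≤ M b := by
        rw [hMdef]
        refine le_trans ?_ (Finset.le_sup' _ (Finset.mem_Icc.mpr ⟨le_refl 1, hT⟩))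
        apply Finset.sum_nonneg
        intro v _
        exact mul_nonneg (inv_nonneg.mpr hDpos.le)
          (Finset.sum_nonneg fun d _ => div_nonneg (hdem v d) (hcap b d).le)
      rcases Nat.eq_zero_or_pos (kB b) with h0 | hpos
      · rw [h0]
        push_cast
        nlinarith [hM0, hDpos]
      · have hne : (Finset.univ : Finset U).Nonempty := by
          by_contra hcon
          rw [Finset.not_nonempty_iff_eq_empty] at hcon
          rw [hkBdef] at hpos
          simp [hcon] at hpos
        obtain ⟨u, -, hsup⟩ := Finset.exists_mem_eq_sup Finset.univ hne
          (fun v => if π v = b then A v + 1 else 0)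
        have hkb : kB b = if π u = b then A u + 1 else 0 := by rw [hkBdef]; exact hsup
        by_cases hpb : π u = b
        swap
        · rw [if_neg hpb] at hkb; omega
        rw [if_pos hpb] at hkb
        have htmem : s u ∈ Finset.Icc 1 T :=
          Finset.mem_Icc.mpr ⟨(hspan u).1, le_trans (hspan u).2.1 (hspan u).2.2⟩
        have hfle : (∑ v ∈ Finset.univ.filter (fun v => π v = b ∧ s v ≤ s u ∧ s u ≤ e v),
            (D : ℝ)⁻¹ * ∑ d, dem v d / cap b d) ≤ M b := by
          rw [hMdef]
          beta_reduce
          exact Finset.le_sup'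
            (fun t => ∑ v ∈ Finset.univ.filter (fun v => π v = b ∧ s v ≤ t ∧ t ≤ e v),
              (D : ℝ)⁻¹ * ∑ d, dem v d / cap b d) htmem
        have step1 : ∀ j' < A u, (D:ℝ)⁻¹ * (1/2) ≤
            ∑ v ∈ Finset.univ.filter (fun v => π v = b ∧ A v = j' ∧ s v ≤ s u ∧ s u ≤ e v),
              (D:ℝ)⁻¹ * ∑ d, dem v d / cap b d := by
          intro j' hj'
          obtain ⟨i, hi, hli⟩ := List.getElem_of_mem (hmem u)
          have hfail := S17.failure cap dem s e π hcap hsmall hdem l hl hsort i hi j'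
            (by rw [hli, ← hAdef]; exact hj')
          rw [← hAdef] at hfail
          rw [hli, hpb] at hfail
          obtain ⟨d, hd⟩ := hfail
          have hSeq : Finset.univ.filter (fun v => π v = b ∧ A v = j' ∧ s v ≤ s u ∧ s u ≤ e v)
              = Finset.univ.filter (fun v => π v = b ∧ A v = j' ∧ s v ≤ s u ∧ s u ≤ e v) := rfl
          calc (D:ℝ)⁻¹ * (1/2)
              ≤ (D:ℝ)⁻¹ * ((∑ v ∈ Finset.univ.filter
                  (fun v => π v = b ∧ A v = j' ∧ s v ≤ s u ∧ s u ≤ e v), dem v d) / cap b d) := by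
                apply mul_le_mul_of_nonneg_left _ (by positivity)
                rw [le_div_iff₀ (hcap b d)]
                have hconv : (∑ v ∈ Finset.univ.filter
                    (fun v => π v = b ∧ A v = j' ∧ s v ≤ s u ∧ s u ≤ e v), dem v d)
                    = ∑ v ∈ Finset.univ.filter
                    (fun v => π v = b ∧ A v = j' ∧ s v ≤ s u ∧ s u ≤ e v), dem v d := rfl
                have hd2 : cap b d / 2 < ∑ v ∈ Finset.univ.filter
                    (fun v => π v = b ∧ A v = j' ∧ s v ≤ s u ∧ s u ≤ e v), dem v d := by
                  convert hd using 2
                linarith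
            _ = ∑ v ∈ Finset.univ.filter
                  (fun v => π v = b ∧ A v = j' ∧ s v ≤ s u ∧ s u ≤ e v),
                  (D:ℝ)⁻¹ * (dem v d / cap b d) := by
                rw [Finset.sum_div, Finset.mul_sum]
            _ ≤ ∑ v ∈ Finset.univ.filter
                  (fun v => π v = b ∧ A v = j' ∧ s v ≤ s u ∧ s u ≤ e v),
                  (D:ℝ)⁻¹ * ∑ d', dem v d' / cap b d' := by
                apply Finset.sum_le_sum
                intro v hv
                apply mul_le_mul_of_nonneg_left _ (by positivity)
                apply Finset.single_le_sum (f := fun d' => dem v d' / cap b d')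
                  (fun d' _ => div_nonneg (hdem v d') (hcap b d').le) (Finset.mem_univ d)
        have hdisj : (↑(Finset.range (A u)) : Set ℕ).PairwiseDisjoint
            (fun j' => Finset.univ.filter
              (fun v => π v = b ∧ A v = j' ∧ s v ≤ s u ∧ s u ≤ e v)) := by
          intro x _ y _ hxy
          refine Finset.disjoint_left.mpr ?_
          intro v hv1 hv2
          simp only [Finset.mem_filter] at hv1 hv2
          exact hxy (hv1.2.2.1 ▸ hv2.2.2.1 : x = y)
        have step2 : (∑ j' ∈ Finset.range (A u), ∑ v ∈ Finset.univ.filter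
              (fun v => π v = b ∧ A v = j' ∧ s v ≤ s u ∧ s u ≤ e v),
              (D:ℝ)⁻¹ * ∑ d', dem v d' / cap b d')
            ≤ ∑ v ∈ Finset.univ.filter (fun v => π v = b ∧ s v ≤ s u ∧ s u ≤ e v),
              (D:ℝ)⁻¹ * ∑ d', dem v d' / cap b d' := by
          rw [← Finset.sum_biUnion hdisj]
          apply Finset.sum_le_sum_of_subset_of_nonneg
          · intro v hv
            rw [Finset.mem_biUnion] at hv
            obtain ⟨j', _, hv⟩ := hv
            simp only [Finset.mem_filter] at hv ⊢
            exact ⟨Finset.mem_univ v, hv.2.1, hv.2.2.2⟩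
          · intro v _ _
            exact mul_nonneg (inv_nonneg.mpr hDpos.le)
              (Finset.sum_nonneg fun d' _ => div_nonneg (hdem v d') (hcap b d').le)
        have hsum_lb : (A u : ℝ) * ((D:ℝ)⁻¹ * (1/2)) ≤
            ∑ j' ∈ Finset.range (A u), ∑ v ∈ Finset.univ.filter
              (fun v => π v = b ∧ A v = j' ∧ s v ≤ s u ∧ s u ≤ e v),
              (D:ℝ)⁻¹ * ∑ d', dem v d' / cap b d' := by
          have : (A u : ℝ) * ((D:ℝ)⁻¹ * (1/2))
              = ∑ _j' ∈ Finset.range (A u), (D:ℝ)⁻¹ * (1/2) := by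
            rw [Finset.sum_const, Finset.card_range, nsmul_eq_mul]
          rw [this]
          exact Finset.sum_le_sum (fun j' hj' => step1 j' (Finset.mem_range.mp hj'))
        have hmM : (A u : ℝ) * ((D:ℝ)⁻¹ * (1/2)) ≤ M b :=
          le_trans hsum_lb (le_trans step2 hfle)
        rw [hkb]
        push_cast
        have hfin : (A u : ℝ) ≤ 2 * D * M b := by
          have h2 := mul_le_mul_of_nonneg_right hmM (by positivity : (0:ℝ) ≤ 2 * D)
          calc (A u : ℝ) = (A u : ℝ) * ((D:ℝ)⁻¹ * (1/2)) * (2 * D) := by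
                have hDne : (D:ℝ) ≠ 0 := ne_of_gt hDpos
                field_simp
            _ ≤ M b * (2 * D) := h2
            _ = 2 * D * M b := by ring
        linarith
    -- assemble the cost sum
    have hLHS : (∑ bn : Fin k, cost ((eqv.symm bn).1))
        = ∑ b : Btype, (kB b : ℝ) * cost b := by
      rw [Equiv.sum_comp eqv.symm (fun p => cost p.1)]
      rw [← Finset.univ_sigma_univ, Finset.sum_sigma]
      simp [Finset.sum_const, nsmul_eq_mul]
    rw [hLHS]
    have hstep : ∀ b, (kB b : ℝ) * cost b ≤ cost b + 2 * D * (cost b * M b) := by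
      intro b
      have := mul_le_mul_of_nonneg_right (key b) (hcost b).le
      calc (kB b : ℝ) * cost b ≤ (1 + 2 * D * M b) * cost b := this
        _ = cost b + 2 * D * (cost b * M b) := by ring
    calc ∑ b : Btype, (kB b : ℝ) * cost b
        ≤ ∑ b : Btype, (cost b + 2 * D * (cost b * M b)) :=
          Finset.sum_le_sum (fun b _ => hstep b)
      _ = (∑ b : Btype, cost b) + 2 * D * ∑ b : Btype, cost b * M b := by
          rw [Finset.sum_add_distrib, ← Finset.mul_sum]
end
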